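/- arXiv:2204.01074 — 4 statements merged into one kernel-verified Lean document; each statement's English description precedes it below -/
import Mathlib

section
/- Let G be a multigraph with χ'(G) = k+1 ≥ Δ(G)+2 where k = Δ(G)+μ(G)−1 (i.e., χ'(G) = Δ(G)+μ(G)), let e be a k-critical edge of G, and let H be the unique maximal k-dense subgraph of G−e containing both endvertices of e. Then Δ(H+e) = Δ(G), μ(H+e) = μ(G), and the diameter of H+e is at most the diameter of H, which is at most 2. -/
/-- A finite multigraph: finite vertex and edge types, each edge has an unordered pair of
endvertices, and there are no loops. -/
structure Multigraph where
  V : Type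
  E : Type
  [fintypeV : Fintype V]
  [fintypeE : Fintype E]
  ends : E → Sym2 V
  loopless : ∀ e, ¬ (ends e).IsDiag

attribute [instance] Multigraph.fintypeV Multigraph.fintypeE

namespace Multigraph

section Basic

variable (G : Multigraph)

/-- The degree of a vertex: the number of edges incident with it. -/
noncomputable def degree (v : G.V) : ℕ := {e : G.E | v ∈ G.ends e}.ncard

/-- The maximum degree Δ(G). -/
noncomputable def maxDegree : ℕ := sSup (Set.range G.degree)

/-- The number of edges joining `x` and `y` (the multiplicity e_G(x,y)). -/
noncomputable def mult (x y : G.V) : ℕ := {e : G.E | G.ends e = s(x, y)}.ncard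

/-- The maximum multiplicity μ(G). -/
noncomputable def maxMult : ℕ := sSup {m : ℕ | ∃ x y : G.V, G.mult x y = m}

/-- `c` is a proper edge coloring, with palette `{1,…,k}`, of the edges in `D`
(edges sharing an endvertex get distinct colors). -/
def IsProperColoringOn (k : ℕ) (D : Set G.E) (c : G.E → ℕ) : Prop :=
  (∀ e ∈ D, c e ∈ Set.Icc 1 k) ∧
  ∀ e ∈ D, ∀ f ∈ D, e ≠ f → (∃ v, v ∈ G.ends e ∧ v ∈ G.ends f) → c e ≠ c f

/-- A proper `k`-edge-coloring of all of `G`. -/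
def IsProperColoring (k : ℕ) (c : G.E → ℕ) : Prop := G.IsProperColoringOn k Set.univ c

/-- The chromatic index of the subgraph of `G` consisting of the edges in `D`
(vertices are irrelevant for edge colorings). -/
noncomputable def chromIndexOn (D : Set G.E) : ℕ := sInf {k | ∃ c, G.IsProperColoringOn k D c}

/-- The chromatic index χ'(G). -/
noncomputable def chromIndex : ℕ := G.chromIndexOn Set.univ

/-- The set of colors of the palette `{1,…,k}` missing at `v`, where only the edges in `D`
are regarded as colored. -/
def missingOn (k : ℕ) (D : Set G.E) (c : G.E → ℕ) (v : G.V) : Set ℕ :=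
  {i | i ∈ Set.Icc 1 k ∧ ∀ e ∈ D, v ∈ G.ends e → c e ≠ i}

/-- `X` is elementary: missing-color sets of distinct vertices of `X` are disjoint. -/
def IsElementaryOn (k : ℕ) (D : Set G.E) (c : G.E → ℕ) (X : Set G.V) : Prop :=
  ∀ u ∈ X, ∀ v ∈ X, u ≠ v → G.missingOn k D c u ∩ G.missingOn k D c v = ∅

/-- The boundary ∂_G(X): edges with an endvertex in `X` and an endvertex outside `X`. -/
def boundary (X : Set G.V) : Set G.E :=
  {e | (∃ v ∈ G.ends e, v ∈ X) ∧ (∃ v ∈ G.ends e, v ∉ X)}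

/-- `X` is strongly closed (w.r.t. the coloring `c` of the edges in `D`): every color on a
boundary edge of `X` is present at every vertex of `X`, and the colors on the boundary edges
are pairwise distinct. -/
def IsStronglyClosedOn (D : Set G.E) (c : G.E → ℕ) (X : Set G.V) : Prop :=
  (∀ e ∈ G.boundary X ∩ D, ∀ v ∈ X, ∃ f ∈ D, v ∈ G.ends f ∧ c f = c e) ∧
  ∀ e ∈ G.boundary X ∩ D, ∀ f ∈ G.boundary X ∩ D, e ≠ f → c e ≠ c f

end Basic

/-- A subgraph of `G`: a set of vertices together with a set of edges all of whose
endvertices belong to the vertex set. -/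
structure Subgraph (G : Multigraph) where
  verts : Set G.V
  edges : Set G.E
  support : ∀ e ∈ edges, ∀ v, v ∈ G.ends e → v ∈ verts

section Sub

variable (G : Multigraph)

/-- The whole graph, as a subgraph of itself. -/
def top : G.Subgraph := ⟨Set.univ, Set.univ, fun _ _ _ _ => Set.mem_univ _⟩

/-- `H` is a `k`-dense subgraph: it has an odd number of vertices and
`|E(H)| = (|V(H)|-1)·k/2`. -/
def IsDense (k : ℕ) (H : G.Subgraph) : Prop :=
  Odd H.verts.ncard ∧ 2 * H.edges.ncard = (H.verts.ncard - 1) * k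

/-- `H` is a `k`-dense subgraph of `G - F` (the graph obtained by deleting the edges of `F`). -/
def IsDenseIn (F : Set G.E) (k : ℕ) (H : G.Subgraph) : Prop :=
  H.edges ∩ F = ∅ ∧ G.IsDense k H

/-- `H` is a maximal `k`-dense subgraph of `G - F`. -/
def IsMaximalDenseIn (F : Set G.E) (k : ℕ) (H : G.Subgraph) : Prop :=
  G.IsDenseIn F k H ∧
  ∀ H' : G.Subgraph, G.IsDenseIn F k H' → H.verts ⊆ H'.verts → H.edges ⊆ H'.edges →
    H.verts = H'.verts ∧ H.edges = H'.edges

/-- The density Γ(H) of a subgraph `H` of `G`: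
`max { 2|E(H')|/(|V(H')|-1) : H' ⊆ H, |V(H')| ≥ 3 odd }` (and `0` if there is no such `H'`,
since in `ℝ` the supremum of the empty set is `0`). -/
noncomputable def densityOf (H : G.Subgraph) : ℝ :=
  sSup {x : ℝ | ∃ H' : G.Subgraph, H'.verts ⊆ H.verts ∧ H'.edges ⊆ H.edges ∧
    3 ≤ H'.verts.ncard ∧ Odd H'.verts.ncard ∧
    x = 2 * (H'.edges.ncard : ℝ) / ((H'.verts.ncard : ℝ) - 1)}

/-- The density Γ(G). -/
noncomputable def density : ℝ := G.densityOf G.top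

/-- `e` is a `k`-critical edge of `G`: `χ'(G-e) = k < χ'(G) = k+1`. -/
def IsCriticalEdge (k : ℕ) (e : G.E) : Prop :=
  G.chromIndexOn {e}ᶜ = k ∧ G.chromIndex = k + 1

/-- Degree of `v` in the subgraph consisting of the edges in `D`. -/
noncomputable def degreeOn (D : Set G.E) (v : G.V) : ℕ := {e : G.E | e ∈ D ∧ v ∈ G.ends e}.ncard

/-- Maximum degree of the subgraph consisting of the edges in `D`. -/
noncomputable def maxDegreeOn (D : Set G.E) : ℕ := sSup (Set.range (G.degreeOn D))

/-- Multiplicity of the pair `x,y` in the subgraph consisting of the edges in `D`. -/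
noncomputable def multOn (D : Set G.E) (x y : G.V) : ℕ :=
  {e : G.E | e ∈ D ∧ G.ends e = s(x, y)}.ncard

/-- Maximum multiplicity of the subgraph consisting of the edges in `D`. -/
noncomputable def maxMultOn (D : Set G.E) : ℕ := sSup {m : ℕ | ∃ x y : G.V, G.multOn D x y = m}

/-- The simple graph underlying the subgraph of `G` with edge set `D`. -/
def simpleOn (D : Set G.E) : SimpleGraph G.V where
  Adj a b := a ≠ b ∧ ∃ e ∈ D, G.ends e = s(a, b)
  symm := ⟨by
    rintro a b ⟨hab, e, he, hh⟩
    exact ⟨hab.symm, e, he, hh.trans Sym2.eq_swap⟩⟩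
  loopless := ⟨by rintro a ⟨h, -⟩; exact h rfl⟩

/-- The diameter (in `ℕ∞`) of the subgraph with vertex set `S` and edge set `D`:
the greatest distance between a pair of its vertices. -/
noncomputable def diamOn (S : Set G.V) (D : Set G.E) : ℕ∞ :=
  sSup {d : ℕ∞ | ∃ u ∈ S, ∃ v ∈ S, (G.simpleOn D).edist u v = d}

/-- The distance (in `ℕ∞`) between two edges of `G`: the length of a shortest path connecting
an endvertex of `e` and an endvertex of `f`. -/
noncomputable def edgeDist (e f : G.E) : ℕ∞ :=
  sInf {d : ℕ∞ | ∃ u v : G.V, u ∈ G.ends e ∧ v ∈ G.ends f ∧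
    (G.simpleOn Set.univ).edist u v = d}

/-- A matching: a set of edges no two of which share an endvertex. -/
def IsMatching (M : Set G.E) : Prop :=
  ∀ e ∈ M, ∀ f ∈ M, e ≠ f → ∀ v : G.V, v ∈ G.ends e → v ∉ G.ends f

/-- An edge `e ∈ E_G(x,y)` is fully `G`-saturated if `d_G(x) = d_G(y) = Δ(G)` and
`e_G(x,y) = μ(G)`. -/
def IsFullySaturated (e : G.E) : Prop :=
  ∃ x y : G.V, G.ends e = s(x, y) ∧ G.degree x = G.maxDegree ∧ G.degree y = G.maxDegree ∧
    G.mult x y = G.maxMult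

/-- One step along a Kempe `(α,β)`-chain: an edge of `D` colored `α` or `β` joining the
two vertices. -/
def chainStep (D : Set G.E) (c : G.E → ℕ) (α β : ℕ) (a b : G.V) : Prop :=
  ∃ e ∈ D, G.ends e = s(a, b) ∧ (c e = α ∨ c e = β)

/-- `u` and `v` lie on the same `(α,β)`-chain, i.e. `P_u(α,β) = P_v(α,β)`. -/
def sameChain (D : Set G.E) (c : G.E → ℕ) (α β : ℕ) (u v : G.V) : Prop :=
  Relation.ReflTransGen (G.chainStep D c α β) u v

end Sub

/-- The Goldberg–Seymour theorem (proved by Chen, Jing and Zang), as a hypothesis: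
every multigraph `G'` with `χ'(G') ≥ Δ(G')+2` satisfies `χ'(G') = ⌈Γ(G')⌉`. -/
def GoldbergSeymour : Prop :=
  ∀ G' : Multigraph, G'.maxDegree + 2 ≤ G'.chromIndex → (G'.chromIndex : ℤ) = ⌈G'.density⌉

/-- A (general) multi-fan at `x` with respect to the edge `e₀ ∈ E_G(x,y₀)` and the coloring
`c` of the edges in `D` with palette `{1,…,k}`: a sequence `(x, e₀, y₀, e₁, y₁, …, e_p, y_p)`
of vertices and pairwise distinct edges with `e_i ∈ E_G(x, y_i)` and, for `i ≥ 1`,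
`c(e_i)` missing at `y_j` for some `j < i`. -/
structure MultiFan (G : Multigraph) (k : ℕ) (D : Set G.E) (c : G.E → ℕ)
    (x : G.V) (e₀ : G.E) (y₀ : G.V) where
  p : ℕ
  edge : Fin (p + 1) → G.E
  vx : Fin (p + 1) → G.V
  edge_zero : edge 0 = e₀
  vx_zero : vx 0 = y₀
  ends_eq : ∀ i, G.ends (edge i) = s(x, vx i)
  edge_inj : Function.Injective edge
  fan_cond : ∀ i : Fin (p + 1), i ≠ 0 →
    ∃ j : Fin (p + 1), j < i ∧ c (edge i) ∈ G.missingOn k D c (vx j)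

namespace MultiFan

variable {G : Multigraph} {k : ℕ} {D : Set G.E} {c : G.E → ℕ} {x : G.V} {e₀ : G.E} {y₀ : G.V}

/-- The vertex set `V(F)` of a multi-fan. -/
def verts (F : MultiFan G k D c x e₀ y₀) : Set G.V := insert x (Set.range F.vx)

/-- `F` is a subsequence of `F'`. -/
def Subseq (F F' : MultiFan G k D c x e₀ y₀) : Prop :=
  ∃ ι : Fin (F.p + 1) → Fin (F'.p + 1), StrictMono ι ∧
    ∀ i, F'.edge (ι i) = F.edge i ∧ F'.vx (ι i) = F.vx i

/-- `F` is a maximal multi-fan: no multi-fan contains it as a proper subsequence. -/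
def IsMaximal (F : MultiFan G k D c x e₀ y₀) : Prop :=
  ∀ F' : MultiFan G k D c x e₀ y₀, F.Subseq F' → F'.p = F.p

/-- `F` contains no `i`-edge. -/
def NoColor (F : MultiFan G k D c x e₀ y₀) (i : ℕ) : Prop :=
  ∀ j, F.edge j ∈ D → c (F.edge j) ≠ i

/-- `F` is a multi-fan without `i`-edges that is maximal among such. -/
def IsMaximalWithout (F : MultiFan G k D c x e₀ y₀) (i : ℕ) : Prop :=
  F.NoColor i ∧
  ∀ F' : MultiFan G k D c x e₀ y₀, F'.NoColor i → F.Subseq F' → F'.p = F.p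

/-- `e_F(x,z)`: the number of edges of the multi-fan `F` joining `x` and `z`. -/
noncomputable def multAt (F : MultiFan G k D c x e₀ y₀) (z : G.V) : ℕ :=
  Nat.card {j : Fin (F.p + 1) // F.vx j = z}

end MultiFan

end Multigraph
section AuxHelpers

lemma nat_sSup_le' {s : Set ℕ} {b : ℕ} (h : ∀ a ∈ s, a ≤ b) : sSup s ≤ b := by
  rcases s.eq_empty_or_nonempty with rfl | hs
  · rw [csSup_empty]; exact bot_le
  · exact csSup_le hs h

lemma ncard_setOf_eq_card_filter {α : Type*} [Fintype α] (p : α → Prop) [DecidablePred p] :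
    {x | p x}.ncard = (Finset.univ.filter p).card := by
  rw [Set.ncard_eq_toFinset_card', Set.toFinset_setOf]

lemma sym2_cases {V : Type*} (z : Sym2 V) (hz : ¬ z.IsDiag) :
    ∃ a b, a ≠ b ∧ z = s(a, b) := by
  induction z using Sym2.ind with
  | _ a b => exact ⟨a, b, fun h => hz (Sym2.mk_isDiag_iff.2 h), rfl⟩

end AuxHelpers

namespace Multigraph

variable (G : Multigraph)

lemma exists_ends_eq (f : G.E) : ∃ a b : G.V, a ≠ b ∧ G.ends f = s(a, b) :=
  sym2_cases (G.ends f) (G.loopless f)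

lemma handshake (D : Set G.E) (S : Set G.V) [Fintype ↥S] (hS : ∀ f ∈ D, ∀ v ∈ G.ends f, v ∈ S) :
    ∑ v ∈ S.toFinset, G.degreeOn D v = 2 * D.ncard := by
  classical
  have hdeg : ∀ v, G.degreeOn D v
      = (Finset.univ.filter fun f => f ∈ D ∧ v ∈ G.ends f).card :=
    fun v => ncard_setOf_eq_card_filter _
  calc ∑ v ∈ S.toFinset, G.degreeOn D v
      = ∑ v ∈ S.toFinset, ∑ f ∈ Finset.univ, (if f ∈ D ∧ v ∈ G.ends f then 1 else 0) := by
        simp_rw [hdeg, Finset.card_filter]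
    _ = ∑ f ∈ Finset.univ, ∑ v ∈ S.toFinset, (if f ∈ D ∧ v ∈ G.ends f then 1 else 0) :=
        Finset.sum_comm
    _ = ∑ f ∈ Finset.univ, (if f ∈ D then 2 else 0) := by
        refine Finset.sum_congr rfl fun f _ => ?_
        by_cases hfD : f ∈ D
        · simp only [hfD, true_and, if_true]
          obtain ⟨a, b, hab, hfab⟩ := G.exists_ends_eq f
          rw [← Finset.card_filter]
          have hset : S.toFinset.filter (fun v => v ∈ G.ends f) = {a, b} := by
            ext w
            simp only [Finset.mem_filter, Set.mem_toFinset, Finset.mem_insert,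
              Finset.mem_singleton, hfab, Sym2.mem_iff]
            constructor
            · rintro ⟨-, h⟩; exact h
            · rintro (rfl | rfl)
              · exact ⟨hS f hfD w (by rw [hfab]; exact Sym2.mem_mk_left _ _), Or.inl rfl⟩
              · exact ⟨hS f hfD w (by rw [hfab]; exact Sym2.mem_mk_right _ _), Or.inr rfl⟩
          rw [hset, Finset.card_pair hab]
        · simp [hfD]
    _ = 2 * D.ncard := by
        have : D.ncard = (Finset.univ.filter fun f => f ∈ D).card := by
          rw [← ncard_setOf_eq_card_filter]; simp
        rw [this, Finset.card_filter]
        rw [Finset.mul_sum]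
        refine Finset.sum_congr rfl fun f _ => ?_
        by_cases hfD : f ∈ D <;> simp [hfD]

lemma exists_coloring : ∃ c, G.IsProperColoring (Fintype.card G.E) c := by
  refine ⟨fun f => (Fintype.equivFin G.E f).1 + 1, fun f _ => ?_, fun f _ g _ hfg _ h => ?_⟩
  · exact Set.mem_Icc.mpr ⟨Nat.succ_le_succ (Nat.zero_le _),
      Nat.succ_le_of_lt (Fintype.equivFin G.E f).isLt⟩
  · apply hfg
    have h' : ((Fintype.equivFin G.E) f).val + 1 = ((Fintype.equivFin G.E) g).val + 1 := h
    have : (Fintype.equivFin G.E f) = (Fintype.equivFin G.E g) := Fin.ext (by omega)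
    exact (Fintype.equivFin G.E).injective this

lemma exists_chromIndex_coloring : ∃ c, G.IsProperColoring G.chromIndex c :=
  Nat.sInf_mem
    (⟨Fintype.card G.E, G.exists_coloring⟩ :
      Set.Nonempty {k | ∃ c, G.IsProperColoringOn k Set.univ c})

lemma two_mul_card_le (S : Set G.V) (hall : ∀ f : G.E, ∀ v ∈ G.ends f, v ∈ S)
    (hodd : Odd S.ncard) {t : ℕ} {c : G.E → ℕ} (hc : G.IsProperColoring t c) :
    2 * (Set.univ : Set G.E).ncard ≤ (S.ncard - 1) * t := by
  classical
  have hmem : ∀ f : G.E, f ∈ Finset.univ → c f ∈ Finset.Icc 1 t := by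
    intro f _
    have := hc.1 f (Set.mem_univ f)
    simpa [Finset.mem_Icc] using this
  have hcard : (Set.univ : Set G.E).ncard = (Finset.univ : Finset G.E).card := by
    rw [Set.ncard_univ, Nat.card_eq_fintype_card, Finset.card_univ]
  have hfib : ∀ i : ℕ, 2 * (Finset.univ.filter fun f => c f = i).card ≤ S.ncard - 1 := by
    intro i
    have hhs := G.handshake {f | c f = i} S (fun f _ v hv => hall f v hv)
    have hdle : ∀ v ∈ S.toFinset, G.degreeOn {f | c f = i} v ≤ 1 := by
      intro v _
      rcases Set.eq_empty_or_nonempty {f | f ∈ {f | c f = i} ∧ v ∈ G.ends f} with hemp | hne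
      · simp only [Multigraph.degreeOn, hemp, Set.ncard_empty]; omega
      · obtain ⟨f₀, hf₀⟩ := hne
        have hsub : {f | f ∈ {f | c f = i} ∧ v ∈ G.ends f} ⊆ {f₀} := by
          rintro g ⟨hgM, hgv⟩
          by_contra hgne
          exact (hc.2 g (Set.mem_univ g) f₀ (Set.mem_univ f₀) hgne ⟨v, hgv, hf₀.2⟩)
            (hgM.trans hf₀.1.symm)
        calc G.degreeOn {f | c f = i} v
            ≤ ({f₀} : Set G.E).ncard := Set.ncard_le_ncard hsub (Set.finite_singleton f₀)
          _ = 1 := Set.ncard_singleton f₀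
    have h2M : 2 * ({f | c f = i} : Set G.E).ncard ≤ S.ncard := by
      calc 2 * ({f | c f = i} : Set G.E).ncard
          = ∑ v ∈ S.toFinset, G.degreeOn {f | c f = i} v := hhs.symm
        _ ≤ ∑ _v ∈ S.toFinset, 1 := Finset.sum_le_sum hdle
        _ = S.toFinset.card := by simp
        _ = S.ncard := (Set.ncard_eq_toFinset_card' S).symm
    have hMf : ({f | c f = i} : Set G.E).ncard
        = (Finset.univ.filter fun f => c f = i).card := ncard_setOf_eq_card_filter _
    obtain ⟨s₀, hs₀⟩ := hodd
    omega
  calc 2 * (Set.univ : Set G.E).ncard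
      = 2 * ∑ i ∈ Finset.Icc 1 t, (Finset.univ.filter fun f => c f = i).card := by
        rw [hcard, Finset.card_eq_sum_card_fiberwise hmem]
    _ = ∑ i ∈ Finset.Icc 1 t, 2 * (Finset.univ.filter fun f => c f = i).card :=
        Finset.mul_sum _ _ _
    _ ≤ ∑ _i ∈ Finset.Icc 1 t, (S.ncard - 1) := Finset.sum_le_sum fun i _ => hfib i
    _ = (Finset.Icc 1 t).card * (S.ncard - 1) := by rw [Finset.sum_const, smul_eq_mul]
    _ = (S.ncard - 1) * t := by rw [Nat.card_Icc]; rw [Nat.add_sub_cancel, Nat.mul_comm]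

lemma chrom_lower (S : Set G.V) (hall : ∀ f : G.E, ∀ v ∈ G.ends f, v ∈ S)
    (hodd : Odd S.ncard) :
    2 * (Set.univ : Set G.E).ncard ≤ (S.ncard - 1) * G.chromIndex := by
  obtain ⟨c, hc⟩ := G.exists_chromIndex_coloring
  exact G.two_mul_card_le S hall hodd hc

lemma degree_le_maxDegree (v : G.V) : G.degree v ≤ G.maxDegree :=
  le_csSup (Set.finite_range _).bddAbove ⟨v, rfl⟩

lemma degreeOn_le_degree (D : Set G.E) (v : G.V) : G.degreeOn D v ≤ G.degree v :=
  Set.ncard_le_ncard (fun _f hf => hf.2) (Set.toFinite _)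

lemma degreeOn_le_maxDegree (D : Set G.E) (v : G.V) : G.degreeOn D v ≤ G.maxDegree :=
  (G.degreeOn_le_degree D v).trans (G.degree_le_maxDegree v)

lemma mult_le_maxMult (x y : G.V) : G.mult x y ≤ G.maxMult := by
  have hbdd : BddAbove {m : ℕ | ∃ x y : G.V, G.mult x y = m} := ?_
  · exact le_csSup hbdd ⟨x, y, rfl⟩
  have hset : {m : ℕ | ∃ x y : G.V, G.mult x y = m}
      = Set.range (fun p : G.V × G.V => G.mult p.1 p.2) := by
    ext m
    constructor
    · rintro ⟨x, y, h⟩; exact ⟨(x, y), h⟩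
    · rintro ⟨⟨x, y⟩, h⟩; exact ⟨x, y, h⟩
  rw [hset]
  exact (Set.finite_range _).bddAbove

lemma multOn_le_mult (D : Set G.E) (x y : G.V) : G.multOn D x y ≤ G.mult x y :=
  Set.ncard_le_ncard (fun _f hf => hf.2) (Set.toFinite _)

lemma maxDegreeOn_le_maxDegree (D : Set G.E) : G.maxDegreeOn D ≤ G.maxDegree := by
  apply nat_sSup_le'
  rintro a ⟨v, rfl⟩
  exact G.degreeOn_le_maxDegree D v

lemma maxMultOn_le_maxMult (D : Set G.E) : G.maxMultOn D ≤ G.maxMult := by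
  apply nat_sSup_le'
  rintro a ⟨x, y, rfl⟩
  exact (G.multOn_le_mult D x y).trans (G.mult_le_maxMult x y)

lemma degreeOn_le_mul_nbrs (D : Set G.E) (v : G.V) :
    G.degreeOn D v ≤ G.maxMult * {z | (G.simpleOn D).Adj v z}.ncard := by
  classical
  set A := {z | (G.simpleOn D).Adj v z} with hA
  have hAfin : A.toFinset.card = A.ncard := (Set.ncard_eq_toFinset_card' A).symm
  have hdeg : G.degreeOn D v
      = (Finset.univ.filter fun f => f ∈ D ∧ v ∈ G.ends f).card :=
    ncard_setOf_eq_card_filter _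
  set w : G.E → G.V := fun g => if h : v ∈ G.ends g then Sym2.Mem.other h else v with hw
  have hmaps : ∀ g ∈ (Finset.univ.filter fun f => f ∈ D ∧ v ∈ G.ends f), w g ∈ A.toFinset := by
    intro g hg
    rw [Finset.mem_filter] at hg
    obtain ⟨-, hgD, hgv⟩ := hg
    have hwg : w g = Sym2.Mem.other hgv := dif_pos hgv
    have hspec : s(v, Sym2.Mem.other hgv) = G.ends g := Sym2.other_spec hgv
    rw [Set.mem_toFinset]
    refine ⟨?_, g, hgD, by rw [hwg]; exact hspec.symm⟩
    intro heq
    apply G.loopless g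
    rw [← hspec]
    exact Sym2.mk_isDiag_iff.2 (heq.trans hwg)
  have hfiber : ∀ z ∈ A.toFinset,
      ((Finset.univ.filter fun f => f ∈ D ∧ v ∈ G.ends f).filter fun g => w g = z).card
        ≤ G.maxMult := by
    intro z _
    have hsub : ((Finset.univ.filter fun f => f ∈ D ∧ v ∈ G.ends f).filter fun g => w g = z)
        ⊆ Finset.univ.filter fun f => f ∈ D ∧ G.ends f = s(v, z) := by
      intro g hg
      rw [Finset.mem_filter, Finset.mem_filter] at hg
      obtain ⟨⟨-, hgD, hgv⟩, hwz⟩ := hg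
      have hwg : w g = Sym2.Mem.other hgv := dif_pos hgv
      have hspec : s(v, Sym2.Mem.other hgv) = G.ends g := Sym2.other_spec hgv
      rw [Finset.mem_filter]
      exact ⟨Finset.mem_univ g, hgD, by rw [← hspec, ← hwg, hwz]⟩
    calc ((Finset.univ.filter fun f => f ∈ D ∧ v ∈ G.ends f).filter fun g => w g = z).card
        ≤ (Finset.univ.filter fun f => f ∈ D ∧ G.ends f = s(v, z)).card :=
          Finset.card_le_card hsub
      _ = G.multOn D v z := (ncard_setOf_eq_card_filter _).symm
      _ ≤ G.maxMult := (G.multOn_le_mult D v z).trans (G.mult_le_maxMult v z)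
  have := Finset.card_le_mul_card_image_of_maps_to hmaps G.maxMult hfiber
  rw [hdeg]
  calc (Finset.univ.filter fun f => f ∈ D ∧ v ∈ G.ends f).card
      ≤ G.maxMult * A.toFinset.card := this
    _ = G.maxMult * A.ncard := by rw [hAfin]

lemma subgraph_edge_bound (K : G.Subgraph) (hodd : Odd K.verts.ncard)
    (h3 : 3 ≤ K.verts.ncard) :
    2 * K.edges.ncard ≤ (K.verts.ncard - 1) * (G.maxDegree + G.maxMult) := by
  classical
  obtain ⟨m, hm⟩ : ∃ m, K.verts.ncard = m + 1 := ⟨K.verts.ncard - 1, by omega⟩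
  have hm2 : 2 ≤ m := by omega
  have hhs := G.handshake K.edges K.verts K.support
  have hcardT : K.verts.toFinset.card = m + 1 := by
    rw [← Set.ncard_eq_toFinset_card', hm]
  have hnb : ∀ v ∈ K.verts.toFinset, G.degreeOn K.edges v ≤ G.maxMult * m := by
    intro v hv
    have hv' : v ∈ K.verts := Set.mem_toFinset.1 hv
    refine (G.degreeOn_le_mul_nbrs K.edges v).trans ?_
    apply Nat.mul_le_mul_left
    have hsub : {z | (G.simpleOn K.edges).Adj v z} ⊆ K.verts \ {v} := by
      intro z hz
      obtain ⟨hzv, g, hg, hends⟩ := hz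
      refine ⟨K.support g hg z (by rw [hends]; exact Sym2.mem_mk_right _ _), ?_⟩
      simp only [Set.mem_singleton_iff]
      intro h
      exact hzv h.symm
    calc {z | (G.simpleOn K.edges).Adj v z}.ncard
        ≤ (K.verts \ {v}).ncard := Set.ncard_le_ncard hsub (Set.toFinite _)
      _ = K.verts.ncard - 1 := Set.ncard_diff_singleton_of_mem hv'
      _ = m := by omega
  have hΔb : ∀ v ∈ K.verts.toFinset, G.degreeOn K.edges v ≤ G.maxDegree :=
    fun v _ => G.degreeOn_le_maxDegree _ _
  rw [hm, Nat.add_sub_cancel]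
  by_cases hcase : G.maxDegree ≤ G.maxMult * m
  · have hsum : ∑ v ∈ K.verts.toFinset, G.degreeOn K.edges v ≤ (m + 1) * G.maxDegree := by
      calc ∑ v ∈ K.verts.toFinset, G.degreeOn K.edges v
          ≤ K.verts.toFinset.card • G.maxDegree := Finset.sum_le_card_nsmul _ _ _ hΔb
        _ = (m + 1) * G.maxDegree := by rw [hcardT, smul_eq_mul]
    have h2 : 2 * K.edges.ncard ≤ (m + 1) * G.maxDegree := hhs ▸ hsum
    have he1 : (m + 1) * G.maxDegree = m * G.maxDegree + G.maxDegree := by ring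
    have he2 : m * (G.maxDegree + G.maxMult) = m * G.maxDegree + m * G.maxMult := by ring
    have he3 : G.maxMult * m = m * G.maxMult := Nat.mul_comm _ _
    linarith
  · push_neg at hcase
    have hcase' : G.maxMult * m + 1 ≤ G.maxDegree := hcase
    have hsum : ∑ v ∈ K.verts.toFinset, G.degreeOn K.edges v ≤ (m + 1) * (G.maxMult * m) := by
      calc ∑ v ∈ K.verts.toFinset, G.degreeOn K.edges v
          ≤ K.verts.toFinset.card • (G.maxMult * m) := Finset.sum_le_card_nsmul _ _ _ hnb
        _ = (m + 1) * (G.maxMult * m) := by rw [hcardT, smul_eq_mul]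
    have h2 : 2 * K.edges.ncard ≤ (m + 1) * (G.maxMult * m) := hhs ▸ hsum
    have he1 : (m + 1) * (G.maxMult * m) = m * (G.maxMult * m) + G.maxMult * m := by ring
    have he2 : m * (G.maxMult * m + 1) = m * (G.maxMult * m) + m := by ring
    have he3 : m * (G.maxMult * m + 1) ≤ m * G.maxDegree := Nat.mul_le_mul_left m hcase'
    have he4 : m * (G.maxDegree + G.maxMult) = m * G.maxDegree + m * G.maxMult := by ring
    have he5 : G.maxMult * m = m * G.maxMult := Nat.mul_comm _ _
    linarith

lemma density_le : G.density ≤ (G.maxDegree : ℝ) + (G.maxMult : ℝ) := by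
  apply Real.sSup_le
  · rintro x ⟨K, -, -, h3, hodd, rfl⟩
    have hb := G.subgraph_edge_bound K hodd h3
    obtain ⟨m, hm⟩ : ∃ m, K.verts.ncard = m + 1 := ⟨K.verts.ncard - 1, by omega⟩
    have hm2 : 2 ≤ m := by omega
    rw [hm, Nat.add_sub_cancel] at hb
    have hmR : (2 : ℝ) ≤ (m : ℝ) := by exact_mod_cast hm2
    rw [hm]
    have hden : ((m : ℝ) + 1 : ℝ) - 1 = (m : ℝ) := by ring
    push_cast
    rw [hden, div_le_iff₀ (by linarith : (0 : ℝ) < (m : ℝ))]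
    have hbR : (2 : ℝ) * (K.edges.ncard : ℝ)
        ≤ (m : ℝ) * ((G.maxDegree : ℝ) + (G.maxMult : ℝ)) := by exact_mod_cast hb
    linarith
  · positivity

noncomputable def restrict (D : Set G.E) : Multigraph where
  V := G.V
  E := ↥D
  fintypeV := G.fintypeV
  fintypeE := D.toFinite.fintype
  ends f := G.ends f.1
  loopless f := G.loopless f.1

lemma restrict_degree (D : Set G.E) (v : G.V) :
    (G.restrict D).degree v = G.degreeOn D v := by
  have himg : {f : G.E | f ∈ D ∧ v ∈ G.ends f}
      = Subtype.val '' {f : (G.restrict D).E | v ∈ (G.restrict D).ends f} := by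
    ext g
    constructor
    · rintro ⟨hg, hv⟩; exact ⟨⟨g, hg⟩, hv, rfl⟩
    · rintro ⟨⟨g, hg⟩, hv, rfl⟩; exact ⟨hg, hv⟩
  show {f : (G.restrict D).E | v ∈ (G.restrict D).ends f}.ncard
    = {f : G.E | f ∈ D ∧ v ∈ G.ends f}.ncard
  rw [himg, Set.ncard_image_of_injective _ Subtype.val_injective]
  rfl

lemma restrict_maxDegree (D : Set G.E) :
    (G.restrict D).maxDegree = G.maxDegreeOn D := by
  have h : (G.restrict D).degree = G.degreeOn D := funext (G.restrict_degree D)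
  rw [Multigraph.maxDegree, h]
  rfl

lemma restrict_mult (D : Set G.E) (x y : G.V) :
    (G.restrict D).mult x y = G.multOn D x y := by
  have himg : {f : G.E | f ∈ D ∧ G.ends f = s(x, y)}
      = Subtype.val '' {f : (G.restrict D).E | (G.restrict D).ends f = s(x, y)} := by
    ext g
    constructor
    · rintro ⟨hg, hv⟩; exact ⟨⟨g, hg⟩, hv, rfl⟩
    · rintro ⟨⟨g, hg⟩, hv, rfl⟩; exact ⟨hg, hv⟩
  show {f : (G.restrict D).E | (G.restrict D).ends f = s(x, y)}.ncard
    = {f : G.E | f ∈ D ∧ G.ends f = s(x, y)}.ncard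
  rw [himg, Set.ncard_image_of_injective _ Subtype.val_injective]
  rfl

lemma restrict_maxMult (D : Set G.E) :
    (G.restrict D).maxMult = G.maxMultOn D := by
  rw [Multigraph.maxMult, Multigraph.maxMultOn]
  congr 1
  ext mval
  constructor
  · rintro ⟨x, y, rfl⟩; exact ⟨x, y, (G.restrict_mult D x y).symm⟩
  · rintro ⟨x, y, rfl⟩; exact ⟨x, y, G.restrict_mult D x y⟩

lemma restrict_card (D : Set G.E) :
    (Set.univ : Set (G.restrict D).E).ncard = D.ncard := by
  rw [Set.ncard_univ]
  exact Nat.card_coe_set_eq D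

end Multigraph


/-- **Lemma 2.4(c).** (Assuming the Goldberg–Seymour theorem.) Let `χ'(G) = k+1 ≥ Δ(G)+2`
where `k = Δ(G)+μ(G)-1` (i.e. `χ'(G) = Δ(G)+μ(G)`), let `e` be a `k`-critical edge of `G`,
and let `H` be the (unique) maximal `k`-dense subgraph of `G-e` containing both endvertices
of `e`. Then `Δ(H+e) = Δ(G)`, `μ(H+e) = μ(G)` and `diam(H+e) ≤ diam(H) ≤ 2`. -/
theorem maximal_dense_degree_mult_diam (hGS : Multigraph.GoldbergSeymour)
    (G : Multigraph) (k : ℕ)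
    (hk : k + 1 = G.maxDegree + G.maxMult)
    (hχ : G.chromIndex = k + 1) (hΔ : G.maxDegree + 2 ≤ k + 1)
    (e : G.E) (he : G.IsCriticalEdge k e)
    (H : G.Subgraph) (hH : G.IsMaximalDenseIn {e} k H)
    (hVe : ∀ v, v ∈ G.ends e → v ∈ H.verts) :
    G.maxDegreeOn (insert e H.edges) = G.maxDegree ∧
    G.maxMultOn (insert e H.edges) = G.maxMult ∧
    G.diamOn H.verts (insert e H.edges) ≤ G.diamOn H.verts H.edges ∧
    G.diamOn H.verts H.edges ≤ 2 := by
  classical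
  set D : Set G.E := insert e H.edges with hDdef
  obtain ⟨⟨hdisj, hodd, hcount⟩, -⟩ := hH
  have heH : e ∉ H.edges := by
    intro h
    have : e ∈ H.edges ∩ {e} := ⟨h, rfl⟩
    rw [hdisj] at this
    exact this
  obtain ⟨x, y, hxy, hexy⟩ := G.exists_ends_eq e
  have hx : x ∈ H.verts := hVe x (by rw [hexy]; exact Sym2.mem_mk_left _ _)
  have hy : y ∈ H.verts := hVe y (by rw [hexy]; exact Sym2.mem_mk_right _ _)
  have hn2 : 2 ≤ H.verts.ncard := by
    calc 2 = ({x, y} : Set G.V).ncard := (Set.ncard_pair hxy).symm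
      _ ≤ H.verts.ncard := Set.ncard_le_ncard
          (by rintro z (rfl | rfl); exacts [hx, hy]) (Set.toFinite _)
  obtain ⟨s₀, hs₀⟩ := hodd
  have hn3 : 3 ≤ H.verts.ncard := by omega
  obtain ⟨m, hm⟩ : ∃ m, H.verts.ncard = m + 1 := ⟨H.verts.ncard - 1, by omega⟩
  have hm2 : 2 ≤ m := by omega
  have hallD : ∀ f ∈ D, ∀ v, v ∈ G.ends f → v ∈ H.verts := by
    intro f hf v hv
    rcases hf with rfl | hf
    · exact hVe v hv
    · exact H.support f hf v hv
  have hDcard : D.ncard = H.edges.ncard + 1 := Set.ncard_insert_of_notMem heH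
  have hcount' : 2 * H.edges.ncard = m * k := by rw [hcount, hm, Nat.add_sub_cancel]
  have hEcount : 2 * D.ncard = m * k + 2 := by rw [hDcard]; omega
  -- the standalone multigraph H + e
  set G' := G.restrict D with hG'def
  have hallD' : ∀ f : G'.E, ∀ v ∈ G'.ends f, v ∈ H.verts := fun f v hv => hallD f.1 f.2 v hv
  have hcard' : 2 * (Set.univ : Set G'.E).ncard = m * k + 2 := by
    rw [G.restrict_card D]; exact hEcount
  have hchromLB : k + 1 ≤ G'.chromIndex := by
    have h : 2 * (Set.univ : Set G'.E).ncard ≤ (H.verts.ncard - 1) * G'.chromIndex :=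
      G'.chrom_lower H.verts hallD' ⟨s₀, hs₀⟩
    rw [hm, Nat.add_sub_cancel] at h
    by_contra hlt
    push_neg at hlt
    have hmul : m * G'.chromIndex ≤ m * k := Nat.mul_le_mul_left m (by omega)
    omega
  have hΔ'le : G.maxDegreeOn D ≤ G.maxDegree := G.maxDegreeOn_le_maxDegree D
  have hμ'le : G.maxMultOn D ≤ G.maxMult := G.maxMultOn_le_maxMult D
  have hGSle : k + 1 ≤ G.maxDegreeOn D + G.maxMultOn D := by
    have hpre : G'.maxDegree + 2 ≤ G'.chromIndex := by
      rw [G.restrict_maxDegree D]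
      calc G.maxDegreeOn D + 2 ≤ G.maxDegree + 2 := by omega
        _ ≤ k + 1 := hΔ
        _ ≤ G'.chromIndex := hchromLB
    have hgs := hGS G' hpre
    have hdens := G'.density_le
    have hceil : ⌈G'.density⌉ ≤ (G'.maxDegree : ℤ) + (G'.maxMult : ℤ) := by
      rw [Int.ceil_le]
      push_cast
      exact hdens
    rw [← hgs] at hceil
    have h2 : G'.chromIndex ≤ G'.maxDegree + G'.maxMult := by exact_mod_cast hceil
    rw [G.restrict_maxDegree D, G.restrict_maxMult D] at h2
    omega
  have haΔ : G.maxDegreeOn D = G.maxDegree := by omega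
  have haμ : G.maxMultOn D = G.maxMult := by omega
  -- diameter monotonicity
  have hle : G.simpleOn H.edges ≤ G.simpleOn D := by
    intro a b hab
    obtain ⟨hne, g, hg, hends⟩ := hab
    exact ⟨hne, g, Set.mem_insert_of_mem e hg, hends⟩
  have hmono : G.diamOn H.verts D ≤ G.diamOn H.verts H.edges := by
    apply sSup_le
    rintro d ⟨u, hu, v, hv, rfl⟩
    calc (G.simpleOn D).edist u v ≤ (G.simpleOn H.edges).edist u v :=
          SimpleGraph.edist_anti hle
      _ ≤ G.diamOn H.verts H.edges := le_sSup ⟨u, hu, v, hv, rfl⟩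
  -- diameter at most two
  have hμ2 : 2 ≤ G.maxMult := by omega
  have hmain : ∀ w ∈ H.verts, m * k + 2 ≤ G.degreeOn D w + m * G.maxDegree := by
    intro w hw
    have hhs := G.handshake D H.verts hallD
    have hwT : w ∈ H.verts.toFinset := Set.mem_toFinset.2 hw
    have hsplit : G.degreeOn D w + ∑ w' ∈ H.verts.toFinset.erase w, G.degreeOn D w'
        = ∑ w' ∈ H.verts.toFinset, G.degreeOn D w' := Finset.add_sum_erase _ _ hwT
    have hcardT : H.verts.toFinset.card = m + 1 := by
      rw [← Set.ncard_eq_toFinset_card', hm]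
    have herase : ∑ w' ∈ H.verts.toFinset.erase w, G.degreeOn D w' ≤ m * G.maxDegree := by
      calc ∑ w' ∈ H.verts.toFinset.erase w, G.degreeOn D w'
          ≤ (H.verts.toFinset.erase w).card • G.maxDegree :=
            Finset.sum_le_card_nsmul _ _ _ (fun z _ => G.degreeOn_le_maxDegree D z)
        _ = m * G.maxDegree := by
            rw [Finset.card_erase_of_mem hwT, hcardT, Nat.add_sub_cancel, smul_eq_mul]
    linarith
  have hdiam2 : G.diamOn H.verts H.edges ≤ 2 := by
    apply sSup_le
    rintro d ⟨u, hu, v, hv, rfl⟩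
    by_contra hgt
    push_neg at hgt
    have hne : u ≠ v := by
      rintro rfl
      rw [SimpleGraph.edist_self] at hgt
      exact absurd hgt (by norm_num)
    have hnadj : ¬ (G.simpleOn H.edges).Adj u v := by
      intro hadj
      rw [SimpleGraph.edist_eq_one_iff_adj.2 hadj] at hgt
      exact absurd hgt (by norm_num)
    have hcom : ∀ z, ¬ ((G.simpleOn H.edges).Adj u z ∧ (G.simpleOn H.edges).Adj v z) := by
      rintro z ⟨h1, h2⟩
      have e1 : (G.simpleOn H.edges).edist u z = 1 := SimpleGraph.edist_eq_one_iff_adj.2 h1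
      have e2 : (G.simpleOn H.edges).edist z v = 1 :=
        SimpleGraph.edist_eq_one_iff_adj.2 h2.symm
      have htr := SimpleGraph.edist_triangle (G := G.simpleOn H.edges) (u := u) (v := z) (w := v)
      rw [e1, e2] at htr
      have : ((1 : ℕ∞) + 1) = 2 := by norm_num
      rw [this] at htr
      exact absurd (lt_of_lt_of_le hgt htr) (lt_irrefl _)
    set A := {z | (G.simpleOn H.edges).Adj u z} with hA
    set B := {z | (G.simpleOn H.edges).Adj v z} with hB
    have hAsub : A ⊆ H.verts \ {u, v} := by
      intro z hz
      obtain ⟨hzu, g, hg, hends⟩ := hz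
      refine ⟨H.support g hg z (by rw [hends]; exact Sym2.mem_mk_right _ _), ?_⟩
      simp only [Set.mem_insert_iff, Set.mem_singleton_iff]
      push_neg
      constructor
      · intro h; exact hzu h.symm
      · intro h
        subst h
        exact hnadj ⟨hzu, g, hg, hends⟩
    have hBsub : B ⊆ H.verts \ {u, v} := by
      intro z hz
      obtain ⟨hzv, g, hg, hends⟩ := hz
      refine ⟨H.support g hg z (by rw [hends]; exact Sym2.mem_mk_right _ _), ?_⟩
      simp only [Set.mem_insert_iff, Set.mem_singleton_iff]
      push_neg
      constructor
      · intro h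
        subst h
        exact hnadj ⟨hzv.symm, g, hg, hends.trans (Sym2.eq_swap)⟩
      · intro h; exact hzv h.symm
    have hdisjAB : Disjoint A B := by
      rw [Set.disjoint_left]
      intro z hzA hzB
      exact hcom z ⟨hzA, hzB⟩
    have hABle : A.ncard + B.ncard + 1 ≤ m := by
      have h1 : (A ∪ B).ncard = A.ncard + B.ncard :=
        Set.ncard_union_eq hdisjAB (Set.toFinite _) (Set.toFinite _)
      have h2 : (A ∪ B) ⊆ H.verts \ {u, v} := Set.union_subset hAsub hBsub
      have h3 : (H.verts \ {u, v}).ncard = H.verts.ncard - 2 := by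
        rw [Set.ncard_diff (by rintro z (rfl | rfl); exacts [hu, hv]) (Set.toFinite _),
          Set.ncard_pair hne]
      have h4 := Set.ncard_le_ncard h2 (Set.toFinite _)
      omega
    have hdegD_le : ∀ w : G.V, G.degreeOn D w ≤ G.degreeOn H.edges w + 1 := by
      intro w
      have hsub : {f | f ∈ D ∧ w ∈ G.ends f}
          ⊆ insert e {f | f ∈ H.edges ∧ w ∈ G.ends f} := by
        rintro g ⟨(rfl | hg), hgw⟩
        · exact Set.mem_insert _ _
        · exact Set.mem_insert_of_mem _ ⟨hg, hgw⟩
      calc G.degreeOn D w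
          ≤ (insert e {f | f ∈ H.edges ∧ w ∈ G.ends f}).ncard :=
            Set.ncard_le_ncard hsub (Set.toFinite _)
        _ ≤ {f | f ∈ H.edges ∧ w ∈ G.ends f}.ncard + 1 := Set.ncard_insert_le _ _
        _ = G.degreeOn H.edges w + 1 := rfl
    have hdegu : G.degreeOn H.edges u ≤ G.maxMult * A.ncard :=
      G.degreeOn_le_mul_nbrs H.edges u
    have hdegv : G.degreeOn H.edges v ≤ G.maxMult * B.ncard :=
      G.degreeOn_le_mul_nbrs H.edges v
    have i1 : m * k + 2 ≤ (G.maxMult * A.ncard + 1) + m * G.maxDegree := by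
      have := hmain u hu
      have := hdegD_le u
      linarith
    have i2 : m * k + 2 ≤ (G.maxMult * B.ncard + 1) + m * G.maxDegree := by
      have := hmain v hv
      have := hdegD_le v
      linarith
    have e1 : m * k + m = m * G.maxDegree + m * G.maxMult := by
      calc m * k + m = m * (k + 1) := by ring
        _ = m * (G.maxDegree + G.maxMult) := by rw [hk]
        _ = m * G.maxDegree + m * G.maxMult := by ring
    have e3 : G.maxMult * A.ncard + G.maxMult * B.ncard + G.maxMult ≤ m * G.maxMult := by
      calc G.maxMult * A.ncard + G.maxMult * B.ncard + G.maxMult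
          = G.maxMult * (A.ncard + B.ncard + 1) := by ring
        _ ≤ G.maxMult * m := Nat.mul_le_mul_left _ hABle
        _ = m * G.maxMult := Nat.mul_comm _ _
    have e4 : 2 * m ≤ m * G.maxMult := by
      calc 2 * m = m * 2 := Nat.mul_comm _ _
        _ ≤ m * G.maxMult := Nat.mul_le_mul_left m hμ2
    linarith
  exact ⟨haΔ, haμ, hmono, hdiam2⟩
end

section
/- Let G be a multigraph with χ'(G) = k ≥ Δ(G)+1 and let H be a k-dense subgraph of G. Let ψ be a k-edge-coloring of H and φ a k-edge-coloring of G−E(H) such that the colors on the edges of ∂_G(H) are pairwise distinct under φ. Then for any fixed color i ∈ [k], by renaming the color classes of ψ on E(H) other than the class of color i, one obtains an edge coloring of G all of whose color classes are matchings, with the possible exception of color i; in the exceptional case exactly one i-edge of E(H) and exactly one i-edge of ∂_G(H) share an endvertex, and this is the only conflict. -/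
section Lemma25Helpers

open scoped Classical

variable {G : Multigraph}

lemma Lemma25.exists_ends (G : Multigraph) (e : G.E) :
    ∃ x y : G.V, x ≠ y ∧ G.ends e = s(x, y) := by
  have h : ∃ z : Sym2 G.V, G.ends e = z := ⟨_, rfl⟩
  rw [Sym2.exists] at h
  obtain ⟨x, y, hxy⟩ := h
  refine ⟨x, y, fun hxy' => ?_, hxy⟩
  exact G.loopless e (by rw [hxy, Sym2.mk_isDiag_iff]; exact hxy')

/-- The endpoints of an edge, as a `Finset`. -/
noncomputable def Lemma25.endsF (G : Multigraph) (e : G.E) : Finset G.V :=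
  Finset.univ.filter (· ∈ G.ends e)

lemma Lemma25.mem_endsF {e : G.E} {v : G.V} : v ∈ Lemma25.endsF G e ↔ v ∈ G.ends e := by
  simp [Lemma25.endsF]

lemma Lemma25.card_endsF (e : G.E) : (Lemma25.endsF G e).card = 2 := by
  obtain ⟨x, y, hxy, h⟩ := Lemma25.exists_ends G e
  have hset : Lemma25.endsF G e = {x, y} := by
    ext v; simp [Lemma25.mem_endsF, h, Sym2.mem_iff]
  rw [hset, Finset.card_insert_of_notMem (by simp [hxy]), Finset.card_singleton]

lemma Lemma25.matching_aux (X : Finset G.V) (M : Finset G.E)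
    (hM1 : ∀ e ∈ M, ∀ v ∈ G.ends e, v ∈ X)
    (hM2 : ∀ e ∈ M, ∀ f ∈ M, e ≠ f → ∀ v, v ∈ G.ends e → v ∉ G.ends f) :
    (M.biUnion (Lemma25.endsF G)).card = 2 * M.card ∧ M.biUnion (Lemma25.endsF G) ⊆ X := by
  constructor
  · rw [Finset.card_biUnion]
    · simp only [Lemma25.card_endsF, Finset.sum_const, smul_eq_mul]
      ring
    · intro e he f hf hne
      rw [Function.onFun, Finset.disjoint_left]
      intro v hv hv'
      exact hM2 e he f hf hne v (Lemma25.mem_endsF.mp hv) (Lemma25.mem_endsF.mp hv')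
  · intro v hv
    obtain ⟨e, he, hv⟩ := Finset.mem_biUnion.mp hv
    exact hM1 e he v (Lemma25.mem_endsF.mp hv)

lemma Lemma25.exists_injOn_of_card_le {α : Type} {s : Finset α} {t : Finset ℕ}
    (h : s.card ≤ t.card) : ∃ f : α → ℕ, Set.InjOn f ↑s ∧ ∀ x ∈ s, f x ∈ t := by
  have h' : Fintype.card ↥s ≤ Fintype.card ↥t := by simpa [Fintype.card_coe] using h
  obtain ⟨g⟩ := Function.Embedding.nonempty_of_card_le h'
  refine ⟨fun x => if hx : x ∈ s then (g ⟨x, hx⟩ : ℕ) else 0, ?_, ?_⟩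
  · intro a ha b hb hab
    simp only [Finset.mem_coe] at ha hb
    simp only [dif_pos ha, dif_pos hb] at hab
    have := g.injective (Subtype.ext hab)
    exact congrArg Subtype.val this
  · intro x hx
    simp only [dif_pos hx]
    exact Finset.coe_mem _

lemma Lemma25.ncard_filter {α : Type} [Fintype α] (P : α → Prop) [DecidablePred P] :
    {x | P x}.ncard = (Finset.univ.filter P).card := by
  rw [Set.ncard_eq_toFinset_card', Set.toFinset_setOf]

end Lemma25Helpers

/-- **Lemma 2.5(b).** Let `χ'(G) = k ≥ Δ(G)+1`, let `H` be a `k`-dense subgraph of `G`, let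
`ψ` be a `k`-edge-coloring of `H` and `φ` a `k`-edge-coloring of `G - E(H)` with pairwise
distinct colors on `∂_G(H)`. For any fixed color `i ∈ [k]`, by renaming the color classes of
`ψ` on `E(H)` other than that of `i`, one obtains an edge coloring of `G` all of whose color
classes are matchings, except that possibly exactly one `i`-edge of `E(H)` and exactly one
`i`-edge of `∂_G(H)` share an endvertex, and this is the only conflict. -/
theorem combine_colorings_fixed_color (G : Multigraph) (k : ℕ)
    (hχ : G.chromIndex = k) (hΔ : G.maxDegree + 1 ≤ k)
    (H : G.Subgraph) (hH : G.IsDense k H)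
    (ψ φ : G.E → ℕ)
    (hψ : G.IsProperColoringOn k H.edges ψ)
    (hφ : G.IsProperColoringOn k H.edgesᶜ φ)
    (hb : ∀ e ∈ G.boundary H.verts, ∀ f ∈ G.boundary H.verts, e ≠ f → φ e ≠ φ f)
    (i : ℕ) (hi : i ∈ Set.Icc 1 k) :
    ∃ (π : Equiv.Perm ℕ) (c : G.E → ℕ),
      π i = i ∧
      (∀ j ∈ Set.Icc 1 k, π j ∈ Set.Icc 1 k) ∧
      (∀ e ∈ H.edges, c e = π (ψ e)) ∧
      (∀ e ∉ H.edges, c e = φ e) ∧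
      (∀ e f : G.E, e ≠ f → (∃ v, v ∈ G.ends e ∧ v ∈ G.ends f) → c e = c f →
        (c e = i ∧ ((e ∈ H.edges ∧ f ∈ G.boundary H.verts) ∨
                    (f ∈ H.edges ∧ e ∈ G.boundary H.verts)))) ∧
      (∀ e f e' f' : G.E,
        (e ≠ f ∧ (∃ v, v ∈ G.ends e ∧ v ∈ G.ends f) ∧ c e = c f) →
        (e' ≠ f' ∧ (∃ v, v ∈ G.ends e' ∧ v ∈ G.ends f') ∧ c e' = c f') →
        (e = e' ∧ f = f') ∨ (e = f' ∧ f = e')) := by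
  classical
  obtain ⟨hodd, hcount⟩ := hH
  set X : Set G.V := H.verts with hXdef
  -- Finset versions
  have hXfin : X.Finite := Set.toFinite X
  set XF : Finset G.V := hXfin.toFinset with hXFdef
  have hXFmem : ∀ v, v ∈ XF ↔ v ∈ X := fun v => hXfin.mem_toFinset
  have hEfin : H.edges.Finite := Set.toFinite _
  set HE : Finset G.E := hEfin.toFinset with hHEdef
  have hHEmem : ∀ e, e ∈ HE ↔ e ∈ H.edges := fun e => hEfin.mem_toFinset
  set n := XF.card with hndef
  have hXcard : X.ncard = n := Set.ncard_eq_toFinset_card _ hXfin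
  have hEcard : H.edges.ncard = HE.card := Set.ncard_eq_toFinset_card _ hEfin
  have hoddn : Odd n := by rwa [hXcard] at hodd
  have hcnt : 2 * HE.card = (n - 1) * k := by rw [← hEcard, ← hXcard]; exact hcount
  have hn1 : 1 ≤ n := by obtain ⟨t, ht⟩ := hoddn; omega
  have hk1 : 1 ≤ k := le_trans hi.1 hi.2
  -- matching bound
  have hmatch : ∀ M : Finset G.E, (∀ e ∈ M, ∀ v ∈ G.ends e, v ∈ X) →
      (∀ e ∈ M, ∀ f ∈ M, e ≠ f → ∀ v, v ∈ G.ends e → v ∉ G.ends f) →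
      (M.biUnion (Lemma25.endsF G)).card = 2 * M.card ∧ 2 * M.card ≤ n - 1 := by
    intro M h1 h2
    obtain ⟨hcardY, hsubY⟩ :=
      Lemma25.matching_aux XF M (fun e he v hv => (hXFmem v).mpr (h1 e he v hv)) h2
    have hle := Finset.card_le_card hsubY
    rw [hcardY] at hle
    obtain ⟨t, ht⟩ := hoddn
    exact ⟨hcardY, by omega⟩
  -- ψ fibers
  set fib : ℕ → Finset G.E := fun j => HE.filter (fun e => ψ e = j) with hfibdef
  have hfib_matching : ∀ j, (∀ e ∈ fib j, ∀ v ∈ G.ends e, v ∈ X) ∧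
      (∀ e ∈ fib j, ∀ f ∈ fib j, e ≠ f → ∀ v, v ∈ G.ends e → v ∉ G.ends f) := by
    intro j
    constructor
    · intro e he v hv
      exact H.support e ((hHEmem e).mp (Finset.mem_filter.mp he).1) v hv
    · intro e he f hf hne v hv hv'
      obtain ⟨he1, he2⟩ := Finset.mem_filter.mp he
      obtain ⟨hf1, hf2⟩ := Finset.mem_filter.mp hf
      exact hψ.2 e ((hHEmem e).mp he1) f ((hHEmem f).mp hf1) hne ⟨v, hv, hv'⟩
        (he2.trans hf2.symm)
  have hsumfib : HE.card = ∑ j ∈ Finset.Icc 1 k, (fib j).card := by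
    apply Finset.card_eq_sum_card_fiberwise
    intro e he
    have := hψ.1 e ((hHEmem e).mp he)
    simpa [Finset.mem_Icc, Set.mem_Icc] using this
  have hfib_eq : ∀ j ∈ Finset.Icc 1 k, 2 * (fib j).card = n - 1 := by
    have hle : ∀ j ∈ Finset.Icc 1 k, 2 * (fib j).card ≤ n - 1 := fun j _ =>
      (hmatch (fib j) (hfib_matching j).1 (hfib_matching j).2).2
    have htot : ∑ j ∈ Finset.Icc 1 k, 2 * (fib j).card = ∑ j ∈ Finset.Icc 1 k, (n - 1) := by
      rw [← Finset.mul_sum, ← hsumfib, Finset.sum_const, Nat.card_Icc, hcnt,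
        Nat.add_sub_cancel, smul_eq_mul, Nat.mul_comm]
    exact fun j hj => (Finset.sum_eq_sum_iff_of_le hle).mp htot j hj
  -- unique missing vertex of each color
  have hmiss : ∀ j ∈ Finset.Icc 1 k,
      ∃! v, v ∈ X ∧ ∀ e ∈ H.edges, v ∈ G.ends e → ψ e ≠ j := by
    intro j hj
    set Y := (fib j).biUnion (Lemma25.endsF G) with hYdef
    obtain ⟨hYcard, hYsub⟩ :=
      Lemma25.matching_aux XF (fib j)
        (fun e he v hv => (hXFmem v).mpr ((hfib_matching j).1 e he v hv))
        (hfib_matching j).2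
    rw [hfib_eq j hj] at hYcard
    have hsd : (XF \ Y).card = 1 := by
      rw [Finset.card_sdiff_of_subset hYsub, hYcard]; omega
    obtain ⟨w, hw⟩ := Finset.card_eq_one.mp hsd
    have hpred : ∀ v, (v ∈ X ∧ ∀ e ∈ H.edges, v ∈ G.ends e → ψ e ≠ j) ↔ v ∈ XF \ Y := by
      intro v
      rw [Finset.mem_sdiff, hXFmem]
      constructor
      · rintro ⟨h1, h2⟩
        refine ⟨h1, fun hv => ?_⟩
        obtain ⟨e, he, hv⟩ := Finset.mem_biUnion.mp hv
        obtain ⟨heH, hej⟩ := Finset.mem_filter.mp he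
        exact h2 e ((hHEmem e).mp heH) (Lemma25.mem_endsF.mp hv) hej
      · rintro ⟨h1, h2⟩
        refine ⟨h1, fun e he hv hej => h2 ?_⟩
        exact Finset.mem_biUnion.mpr
          ⟨e, Finset.mem_filter.mpr ⟨(hHEmem e).mpr he, hej⟩, Lemma25.mem_endsF.mpr hv⟩
    refine ⟨w, (hpred w).mpr (by rw [hw]; exact Finset.mem_singleton_self w), fun v hv => ?_⟩
    have hv' := (hpred v).mp hv
    rw [hw] at hv'
    exact Finset.mem_singleton.mp hv'
  -- a proper k-coloring of all of G
  have hglobal : ∃ c0 : G.E → ℕ, G.IsProperColoringOn k Set.univ c0 := by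
    have hne : {k' | ∃ c0, G.IsProperColoringOn k' Set.univ c0}.Nonempty := by
      refine ⟨Fintype.card G.E, fun e => (Fintype.equivFin G.E e : ℕ) + 1, ?_, ?_⟩
      · intro e _
        dsimp only
        have := (Fintype.equivFin G.E e).isLt
        simp only [Set.mem_Icc]
        omega
      · intro e _ f _ hef _ hc
        dsimp only at hc
        apply hef
        apply (Fintype.equivFin G.E).injective
        exact Fin.ext (by omega)
    have hmem := Nat.sInf_mem hne
    have : G.chromIndex = sInf {k' | ∃ c0, G.IsProperColoringOn k' Set.univ c0} := rfl
    rw [← this, hχ] at hmem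
    exact hmem
  obtain ⟨c0, hc0⟩ := hglobal
  -- no edge outside H.edges has all endpoints in X
  have hInternal : ∀ f : G.E, (∀ v ∈ G.ends f, v ∈ X) → f ∈ H.edges := by
    intro f hf
    set I : Finset G.E := Finset.univ.filter (fun e => ∀ v ∈ G.ends e, v ∈ X) with hIdef
    have hHEI : HE ⊆ I := by
      intro e he
      simp only [hIdef, Finset.mem_filter, Finset.mem_univ, true_and]
      exact fun v hv => H.support e ((hHEmem e).mp he) v hv
    have hIcard : I.card ≤ HE.card := by
      have hIsum : I.card = ∑ j ∈ Finset.Icc 1 k, (I.filter (fun e => c0 e = j)).card := by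
        apply Finset.card_eq_sum_card_fiberwise
        intro e _
        have := hc0.1 e (Set.mem_univ e)
        simpa [Finset.mem_Icc, Set.mem_Icc] using this
      have hIfib : ∀ j ∈ Finset.Icc 1 k, 2 * (I.filter (fun e => c0 e = j)).card ≤ n - 1 := by
        intro j _
        refine (hmatch _ ?_ ?_).2
        · intro e he v hv
          exact (Finset.mem_filter.mp ((Finset.mem_filter.mp he).1)).2 v hv
        · intro e he f' hf' hne v hv hv'
          exact hc0.2 e (Set.mem_univ e) f' (Set.mem_univ f') hne ⟨v, hv, hv'⟩
            ((Finset.mem_filter.mp he).2.trans (Finset.mem_filter.mp hf').2.symm)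
      have h2I : 2 * I.card ≤ (n - 1) * k := by
        calc 2 * I.card = ∑ j ∈ Finset.Icc 1 k, 2 * (I.filter (fun e => c0 e = j)).card := by
              rw [hIsum, Finset.mul_sum]
          _ ≤ ∑ _j ∈ Finset.Icc 1 k, (n - 1) := Finset.sum_le_sum hIfib
          _ = (n - 1) * k := by
              rw [Finset.sum_const, Nat.card_Icc, Nat.add_sub_cancel, smul_eq_mul,
                Nat.mul_comm]
      omega
    have hIHE : HE = I := Finset.eq_of_subset_of_card_le hHEI hIcard
    have hfI : f ∈ I := by
      simp only [hIdef, Finset.mem_filter, Finset.mem_univ, true_and]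
      exact hf
    rw [← hIHE] at hfI
    exact (hHEmem f).mp hfI
  -- boundary facts
  have hbd_not : ∀ e ∈ G.boundary X, e ∉ H.edges := by
    rintro e ⟨-, w, hw, hwX⟩ he
    exact hwX (H.support e he w hw)
  have hbd_unique : ∀ e ∈ G.boundary X, ∃! v, v ∈ G.ends e ∧ v ∈ X := by
    rintro e ⟨⟨u, hu, huX⟩, ⟨w, hw, hwX⟩⟩
    refine ⟨u, ⟨hu, huX⟩, ?_⟩
    rintro v ⟨hv, hvX⟩
    obtain ⟨x, y, hxy, hxyend⟩ := Lemma25.exists_ends G e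
    rw [hxyend, Sym2.mem_iff] at hu hv hw
    rcases hu with rfl | rfl <;> rcases hv with rfl | rfl <;> rcases hw with rfl | rfl <;>
      first
        | rfl
        | exact absurd huX hwX
        | exact absurd hvX hwX
  set vB : G.E → G.V := fun e =>
    if h : ∃ v, v ∈ G.ends e ∧ v ∈ X then h.choose
    else (Lemma25.exists_ends G e).choose with hvBdef
  have hvB_mem : ∀ e ∈ G.boundary X, vB e ∈ G.ends e ∧ vB e ∈ X := by
    rintro e ⟨⟨u, hu, huX⟩, -⟩
    have h : ∃ v, v ∈ G.ends e ∧ v ∈ X := ⟨u, hu, huX⟩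
    rw [hvBdef]
    simp only [dif_pos h]
    exact h.choose_spec
  have hvB_eq : ∀ e ∈ G.boundary X, ∀ v, v ∈ G.ends e → v ∈ X → v = vB e := by
    intro e he v hv hvX
    obtain ⟨w, -, hwu⟩ := hbd_unique e he
    exact (hwu v ⟨hv, hvX⟩).trans (hwu (vB e) ⟨(hvB_mem e he).1, (hvB_mem e he).2⟩).symm
  -- degrees
  have hdeg_le : ∀ v : G.V, G.degree v ≤ k - 1 := by
    intro v
    have h1 : G.degree v ≤ G.maxDegree :=
      le_csSup (Set.Finite.bddAbove (Set.finite_range _)) (Set.mem_range_self v)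
    omega
  set degHf : G.V → Finset G.E := fun v => HE.filter (fun e => v ∈ G.ends e) with hdegHfdef
  set NH : G.V → Finset G.E :=
    fun v => Finset.univ.filter (fun e => e ∉ H.edges ∧ v ∈ G.ends e) with hNHdef
  have hdeg_split : ∀ v : G.V, (degHf v).card + (NH v).card = G.degree v := by
    intro v
    have hdeg : G.degree v = (Finset.univ.filter (fun e => v ∈ G.ends e)).card :=
      Lemma25.ncard_filter _
    have hdisj : Disjoint (degHf v) (NH v) := by
      rw [Finset.disjoint_left]
      intro e he hne
      exact (Finset.mem_filter.mp hne).2.1 ((hHEmem e).mp (Finset.mem_filter.mp he).1)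
    have hunion : degHf v ∪ NH v = Finset.univ.filter (fun e => v ∈ G.ends e) := by
      ext e
      simp only [Finset.mem_union, Finset.mem_filter, Finset.mem_univ, true_and, hdegHfdef,
        hNHdef, hHEmem e]
      tauto
    rw [hdeg, ← hunion, Finset.card_union_of_disjoint hdisj]
  -- present and missing colors at a vertex
  have hpresent_card : ∀ v : G.V, ((degHf v).image ψ).card = (degHf v).card := by
    intro v
    apply Finset.card_image_of_injOn
    intro e he f hf hef
    by_contra hne
    obtain ⟨he1, he2⟩ := Finset.mem_filter.mp (by exact he : e ∈ HE.filter _)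
    obtain ⟨hf1, hf2⟩ := Finset.mem_filter.mp (by exact hf : f ∈ HE.filter _)
    exact hψ.2 e ((hHEmem e).mp he1) f ((hHEmem f).mp hf1) hne ⟨v, he2, hf2⟩ hef
  have hpresent_sub : ∀ v : G.V, (degHf v).image ψ ⊆ Finset.Icc 1 k := by
    intro v j hj
    obtain ⟨e, he, rfl⟩ := Finset.mem_image.mp hj
    have := hψ.1 e ((hHEmem e).mp (Finset.mem_filter.mp he).1)
    simpa [Finset.mem_Icc, Set.mem_Icc] using this
  set missF : G.V → Finset ℕ := fun v => Finset.Icc 1 k \ ((degHf v).image ψ) with hmissFdef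
  have hmissF_card : ∀ v, (missF v).card = k - (degHf v).card := by
    intro v
    rw [hmissFdef]
    dsimp only
    rw [Finset.card_sdiff_of_subset (hpresent_sub v), hpresent_card, Nat.card_Icc, Nat.add_sub_cancel]
  have hmissF_mem : ∀ v j, j ∈ missF v ↔
      (j ∈ Finset.Icc 1 k ∧ ∀ e ∈ H.edges, v ∈ G.ends e → ψ e ≠ j) := by
    intro v j
    rw [hmissFdef]
    dsimp only
    rw [Finset.mem_sdiff]
    constructor
    · rintro ⟨h1, h2⟩
      refine ⟨h1, fun e he hv hej => h2 ?_⟩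
      refine Finset.mem_image.mpr ⟨e, ?_, hej⟩
      exact Finset.mem_filter.mpr ⟨(hHEmem e).mpr he, hv⟩
    · rintro ⟨h1, h2⟩
      refine ⟨h1, fun hmem => ?_⟩
      obtain ⟨e, he, hej⟩ := Finset.mem_image.mp hmem
      rw [hdegHfdef] at he
      dsimp only at he
      obtain ⟨he1, he2⟩ := Finset.mem_filter.mp he
      exact h2 e ((hHEmem e).mp he1) he2 hej
  -- local boundary edges and injections
  set Bv : G.V → Finset G.E := fun v =>
    Finset.univ.filter (fun e => e ∈ G.boundary X ∧ φ e ≠ i ∧ vB e = v) with hBvdef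
  have hBv_NH : ∀ v, Bv v ⊆ NH v := by
    intro v e he
    obtain ⟨-, h1, -, h3⟩ := Finset.mem_filter.mp he
    refine Finset.mem_filter.mpr ⟨Finset.mem_univ e, hbd_not e h1, ?_⟩
    rw [← h3]
    exact (hvB_mem e h1).1
  have hlocal : ∀ v : G.V, ∃ jv : G.E → ℕ,
      Set.InjOn jv ↑(Bv v) ∧ ∀ e ∈ Bv v, jv e ∈ missF v \ {i} := by
    intro v
    apply Lemma25.exists_injOn_of_card_le
    have h1 : (Bv v).card ≤ (NH v).card := Finset.card_le_card (hBv_NH v)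
    have h2 : (degHf v).card + (NH v).card ≤ k - 1 := by
      rw [hdeg_split v]; exact hdeg_le v
    have h3 : (missF v).card = k - (degHf v).card := hmissF_card v
    have h4 : (missF v).card ≤ (missF v \ {i}).card + 1 := by
      have := Finset.card_le_card_sdiff_add_card (s := missF v) (t := {i})
      simpa using this
    omega
  choose jv hjv1 hjv2 using hlocal
  -- the global boundary set and injection
  set B : Finset G.E :=
    Finset.univ.filter (fun e => e ∈ G.boundary X ∧ φ e ≠ i) with hBdef
  set jfun : G.E → ℕ := fun e => jv (vB e) e with hjfundef
  have hmemBv : ∀ e ∈ B, e ∈ Bv (vB e) := by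
    intro e he
    obtain ⟨-, h1, h2⟩ := Finset.mem_filter.mp he
    exact Finset.mem_filter.mpr ⟨Finset.mem_univ e, h1, h2, rfl⟩
  have hjB : ∀ e ∈ B, jfun e ∈ missF (vB e) \ {i} := fun e he =>
    hjv2 (vB e) e (hmemBv e he)
  have hjmiss : ∀ e ∈ B, jfun e ∈ Finset.Icc 1 k ∧
      ∀ e' ∈ H.edges, vB e ∈ G.ends e' → ψ e' ≠ jfun e := by
    intro e he
    have := hjB e he
    rw [Finset.mem_sdiff] at this
    exact (hmissF_mem (vB e) (jfun e)).mp this.1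
  have hjne : ∀ e ∈ B, jfun e ≠ i := by
    intro e he
    have := hjB e he
    rw [Finset.mem_sdiff] at this
    simpa using this.2
  have hjInj : ∀ e ∈ B, ∀ f ∈ B, jfun e = jfun f → e = f := by
    intro e he f hf hef
    have heB : e ∈ G.boundary X := (Finset.mem_filter.mp he).2.1
    have hfB : f ∈ G.boundary X := (Finset.mem_filter.mp hf).2.1
    have hje := hjmiss e he
    have hjf := hjmiss f hf
    obtain ⟨w, -, hwu⟩ := hmiss (jfun e) hje.1
    have h1 : vB e = w := hwu (vB e) ⟨(hvB_mem e heB).2, hje.2⟩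
    have h2 : vB f = w := hwu (vB f) ⟨(hvB_mem f hfB).2, by rw [hef]; exact hjf.2⟩
    have hv : vB e = vB f := h1.trans h2.symm
    have he' : e ∈ Bv (vB f) := by rw [← hv]; exact hmemBv e he
    have hf' : f ∈ Bv (vB f) := hmemBv f hf
    apply hjv1 (vB f) (Finset.mem_coe.mpr he') (Finset.mem_coe.mpr hf')
    have h1' : jfun e = jv (vB f) e := by
      rw [hjfundef]
      dsimp only
      rw [hv]
    have h2' : jfun f = jv (vB f) f := rfl
    rw [← h1', ← h2']
    exact hef
  -- permutation construction
  set U : Finset ℕ := (Finset.Icc 1 k).erase i with hUdef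
  set S : Finset ℕ := B.image jfun with hSdef
  set T : Finset ℕ := B.image φ with hTdef
  have hjU : ∀ e ∈ B, jfun e ∈ U := by
    intro e he
    refine Finset.mem_erase.mpr ⟨hjne e he, (hjmiss e he).1⟩
  have hφU : ∀ e ∈ B, φ e ∈ U := by
    intro e he
    obtain ⟨-, h1, h2⟩ := Finset.mem_filter.mp he
    refine Finset.mem_erase.mpr ⟨h2, ?_⟩
    have := hφ.1 e (hbd_not e h1)
    simpa [Finset.mem_Icc, Set.mem_Icc] using this
  have heSbij : Function.Bijective (fun b : {e // e ∈ B} =>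
      (⟨⟨jfun b.1, hjU b.1 b.2⟩, Finset.mem_image.mpr ⟨b.1, b.2, rfl⟩⟩ :
        {u : {x // x ∈ U} // (u : ℕ) ∈ S})) := by
    constructor
    · rintro ⟨a, ha⟩ ⟨b, hbm⟩ hab
      have : jfun a = jfun b := congrArg (fun z => ((z : {u : {x // x ∈ U} // (u : ℕ) ∈ S}) :
        {x // x ∈ U}).1 ) hab
      exact Subtype.ext (hjInj a ha b hbm this)
    · rintro ⟨⟨x, hxU⟩, hxS⟩
      obtain ⟨e, he, hex⟩ := Finset.mem_image.mp hxS
      exact ⟨⟨e, he⟩, Subtype.ext (Subtype.ext hex)⟩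
  have heTbij : Function.Bijective (fun b : {e // e ∈ B} =>
      (⟨⟨φ b.1, hφU b.1 b.2⟩, Finset.mem_image.mpr ⟨b.1, b.2, rfl⟩⟩ :
        {u : {x // x ∈ U} // (u : ℕ) ∈ T})) := by
    constructor
    · rintro ⟨a, ha⟩ ⟨b, hbm⟩ hab
      have : φ a = φ b := congrArg (fun z => ((z : {u : {x // x ∈ U} // (u : ℕ) ∈ T}) :
        {x // x ∈ U}).1 ) hab
      refine Subtype.ext ?_
      by_contra hne
      exact hb a (Finset.mem_filter.mp ha).2.1 b (Finset.mem_filter.mp hbm).2.1 hne this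
    · rintro ⟨⟨x, hxU⟩, hxS⟩
      obtain ⟨e, he, hex⟩ := Finset.mem_image.mp hxS
      exact ⟨⟨e, he⟩, Subtype.ext (Subtype.ext hex)⟩
  set eS := Equiv.ofBijective _ heSbij with heSdef
  set eT := Equiv.ofBijective _ heTbij with heTdef
  set eST : {u : {x // x ∈ U} // (u : ℕ) ∈ S} ≃ {u : {x // x ∈ U} // (u : ℕ) ∈ T} :=
    eS.symm.trans eT with heSTdef
  set π0 : Equiv.Perm {x // x ∈ U} := Equiv.extendSubtype eST with hπ0def
  set π : Equiv.Perm ℕ :=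
    π0.extendDomain (Equiv.refl {x // x ∈ U}) with hπdef
  have hπ_not : ∀ x : ℕ, x ∉ U → π x = x := fun x hx =>
    Equiv.Perm.extendDomain_apply_not_subtype π0 (Equiv.refl _) hx
  have hπ_mem : ∀ (x : ℕ) (hx : x ∈ U), π x = ↑(π0 ⟨x, hx⟩) := by
    intro x hx
    have := Equiv.Perm.extendDomain_apply_subtype π0 (Equiv.refl {x // x ∈ U}) (b := x) hx
    simpa using this
  have hπU : ∀ x (hx : x ∈ U), π x ∈ U := by
    intro x hx
    rw [hπ_mem x hx]
    exact (π0 ⟨x, hx⟩).2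
  have hπi : π i = i := hπ_not i (by simp [hUdef])
  have hπIcc : ∀ j ∈ Set.Icc 1 k, π j ∈ Set.Icc 1 k := by
    intro j hj
    by_cases hji : j = i
    · rw [hji, hπi]; exact hi
    · have hjU' : j ∈ U := Finset.mem_erase.mpr ⟨hji, by
        simpa [Finset.mem_Icc, Set.mem_Icc] using hj⟩
      have := Finset.mem_of_mem_erase (hπU j hjU')
      simpa [Finset.mem_Icc, Set.mem_Icc] using this
  have hπj : ∀ e ∈ B, π (jfun e) = φ e := by
    intro e he
    have hjUe := hjU e he
    rw [hπ_mem _ hjUe]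
    have hS' : ((⟨jfun e, hjUe⟩ : {x // x ∈ U}) : ℕ) ∈ S :=
      Finset.mem_image.mpr ⟨e, he, rfl⟩
    rw [hπ0def, Equiv.extendSubtype_apply_of_mem eST _ hS']
    have hback : eS.symm ⟨⟨jfun e, hjUe⟩, hS'⟩ = ⟨e, he⟩ := by
      rw [Equiv.symm_apply_eq]
      apply Subtype.ext
      apply Subtype.ext
      rfl
    show ((eST ⟨⟨jfun e, hjUe⟩, hS'⟩ : {u : {x // x ∈ U} // (u : ℕ) ∈ T}) :
      {x // x ∈ U}).1 = φ e
    rw [heSTdef]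
    show ((eT (eS.symm ⟨⟨jfun e, hjUe⟩, hS'⟩) : {u : {x // x ∈ U} // (u : ℕ) ∈ T}) :
      {x // x ∈ U}).1 = φ e
    rw [hback]
    rfl
  -- the combined coloring
  set c : G.E → ℕ := fun e => if e ∈ H.edges then π (ψ e) else φ e with hcdef
  have hcH : ∀ e ∈ H.edges, c e = π (ψ e) := fun e he => if_pos he
  have hcN : ∀ e ∉ H.edges, c e = φ e := fun e he => if_neg he
  -- cross conflicts
  have hcross : ∀ e, e ∈ H.edges → ∀ f, f ∉ H.edges →
      (∃ v, v ∈ G.ends e ∧ v ∈ G.ends f) → π (ψ e) = φ f →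
      φ f = i ∧ f ∈ G.boundary X := by
    rintro e he f hf ⟨v, hve, hvf⟩ heq
    have hvX : v ∈ X := H.support e he v hve
    have hfb : f ∈ G.boundary X := by
      refine ⟨⟨v, hvf, hvX⟩, ?_⟩
      by_contra hall
      push_neg at hall
      exact hf (hInternal f hall)
    refine ⟨?_, hfb⟩
    by_contra hfi
    have hfB : f ∈ B := Finset.mem_filter.mpr ⟨Finset.mem_univ f, hfb, hfi⟩
    have h1 : φ f = π (jfun f) := (hπj f hfB).symm
    have h2 : ψ e = jfun f := π.injective (heq.trans h1)
    have hv_eq : v = vB f := hvB_eq f hfb v hvf hvX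
    exact (hjmiss f hfB).2 e he (hv_eq ▸ hve) h2
  -- the main conflict classification
  have main5 : ∀ e f : G.E, e ≠ f → (∃ v, v ∈ G.ends e ∧ v ∈ G.ends f) → c e = c f →
      (c e = i ∧ ((e ∈ H.edges ∧ f ∈ G.boundary X) ∨
                  (f ∈ H.edges ∧ e ∈ G.boundary X))) := by
    intro e f hne hadj heq
    by_cases he : e ∈ H.edges <;> by_cases hf : f ∈ H.edges
    · exfalso
      rw [hcH e he, hcH f hf] at heq
      exact hψ.2 e he f hf hne hadj (π.injective heq)
    · rw [hcH e he, hcN f hf] at heq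
      obtain ⟨hfi, hfb⟩ := hcross e he f hf hadj heq
      exact ⟨by rw [hcH e he, heq, hfi], Or.inl ⟨he, hfb⟩⟩
    · rw [hcN e he, hcH f hf] at heq
      obtain ⟨v, hv1, hv2⟩ := hadj
      obtain ⟨hei, heb⟩ := hcross f hf e he ⟨v, hv2, hv1⟩ heq.symm
      exact ⟨by rw [hcN e he, hei], Or.inr ⟨hf, heb⟩⟩
    · exfalso
      rw [hcN e he, hcN f hf] at heq
      exact hφ.2 e he f hf hne hadj heq
  refine ⟨π, c, hπi, hπIcc, hcH, hcN, main5, ?_⟩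
  -- uniqueness of the conflict
  have hbd_eqq : ∀ b b', b ∈ G.boundary X → b' ∈ G.boundary X → c b = i → c b' = i →
      b = b' := by
    intro b b' hb1 hb2 hc1 hc2
    by_contra hne
    apply hb b hb1 b' hb2 hne
    rw [← hcN b (hbd_not b hb1), ← hcN b' (hbd_not b' hb2), hc1, hc2]
  have hH_eqq : ∀ a a' b₀, a ∈ H.edges → a' ∈ H.edges → b₀ ∈ G.boundary X →
      (∃ v, v ∈ G.ends a ∧ v ∈ G.ends b₀) → (∃ v, v ∈ G.ends a' ∧ v ∈ G.ends b₀) →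
      c a = c a' → a = a' := by
    rintro a a' b₀ ha ha' hbb ⟨v, hv1, hv2⟩ ⟨w, hw1, hw2⟩ hcc
    by_contra hne
    have hv_eq : v = vB b₀ := hvB_eq b₀ hbb v hv2 (H.support a ha v hv1)
    have hw_eq : w = vB b₀ := hvB_eq b₀ hbb w hw2 (H.support a' ha' w hw1)
    have hnepsi : ψ a ≠ ψ a' :=
      hψ.2 a ha a' ha' hne ⟨vB b₀, hv_eq ▸ hv1, hw_eq ▸ hw1⟩
    apply hnepsi
    apply π.injective
    rw [← hcH a ha, ← hcH a' ha']
    exact hcc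
  rintro e f e' f' ⟨hne, hadj, heq⟩ ⟨hne', hadj', heq'⟩
  obtain ⟨hci, hcase⟩ := main5 e f hne hadj heq
  obtain ⟨hci', hcase'⟩ := main5 e' f' hne' hadj' heq'
  have hcf : c f = i := heq ▸ hci
  have hcf' : c f' = i := heq' ▸ hci'
  obtain ⟨v, hv1, hv2⟩ := hadj
  obtain ⟨v', hv1', hv2'⟩ := hadj'
  rcases hcase with ⟨heH, hfb⟩ | ⟨hfH, heb⟩ <;>
    rcases hcase' with ⟨heH', hfb'⟩ | ⟨hfH', heb'⟩
  · -- e,e' ∈ H ; f,f' boundary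
    have hff : f = f' := hbd_eqq f f' hfb hfb' hcf hcf'
    have hee : e = e' := hH_eqq e e' f heH heH' hfb ⟨v, hv1, hv2⟩
      ⟨v', hv1', by rw [hff]; exact hv2'⟩ (hci.trans hci'.symm)
    exact Or.inl ⟨hee, hff⟩
  · -- e ∈ H, f bd ; f' ∈ H, e' bd
    have hfe' : f = e' := hbd_eqq f e' hfb heb' hcf hci'
    have hef' : e = f' := hH_eqq e f' f heH hfH' hfb ⟨v, hv1, hv2⟩
      ⟨v', hv2', by rw [hfe']; exact hv1'⟩ (hci.trans hcf'.symm)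
    exact Or.inr ⟨hef', hfe'.symm ▸ rfl⟩
  · -- f ∈ H, e bd ; e' ∈ H, f' bd
    have hef' : e = f' := hbd_eqq e f' heb hfb' hci hcf'
    have hfe' : f = e' := hH_eqq f e' e hfH heH' heb ⟨v, hv2, hv1⟩
      ⟨v', hv1', by rw [hef']; exact hv2'⟩ (hcf.trans hci'.symm)
    exact Or.inr ⟨hef', hfe'⟩
  · -- f,f' ∈ H ; e,e' bd
    have hee : e = e' := hbd_eqq e e' heb heb' hci hci'
    have hff : f = f' := hH_eqq f f' e hfH hfH' heb ⟨v, hv2, hv1⟩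
      ⟨v', hv2', by rw [hee]; exact hv1'⟩ (hcf.trans hcf'.symm)
    exact Or.inl ⟨hee, hff⟩
end

section
/- Let G be a multigraph, let e ∈ E_G(x,y) be a k-critical edge with k ≥ Δ(G), let φ be a k-edge-coloring of G−e, and let F = (x, e, y_0, e_1, y_1, …, e_p, y_p) with y_0 = y be a multi-fan at x with respect to e and φ. Then V(F) is φ-elementary, and every edge in E(F) is a k-critical edge of G. -/
namespace GSAux
open Multigraph

variable {G : Multigraph} {k : ℕ} {x y : G.V} {e₀ : G.E}

lemma missing_iff {ψ : G.E → ℕ} {v : G.V} {γ : ℕ} :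
    γ ∈ G.missingOn k {e₀}ᶜ ψ v ↔
      (γ ∈ Set.Icc 1 k ∧ ∀ f, f ≠ e₀ → v ∈ G.ends f → ψ f ≠ γ) := by
  simp [Multigraph.missingOn]

lemma sym2_pair {s : Sym2 G.V} {w : G.V} (hw : w ∈ s) : ∃ w', s = s(w, w') := by
  induction s using Sym2.ind with
  | _ p q =>
    rcases Sym2.mem_iff.mp hw with rfl | rfl
    · exact ⟨q, rfl⟩
    · exact ⟨p, Sym2.eq_swap⟩

lemma ne_of_ends {f : G.E} {w w' : G.V} (h : G.ends f = s(w, w')) : w ≠ w' := by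
  intro hh
  exact G.loopless f (by rw [h, hh]; simp)

/-- A linear fan: a multi-fan whose fan condition is witnessed by the previous vertex. -/
structure LinFan (G : Multigraph) (k : ℕ) (x y : G.V) (e₀ : G.E) (ψ : G.E → ℕ) where
  n : ℕ
  E : ℕ → G.E
  Y : ℕ → G.V
  E0 : E 0 = e₀
  Y0 : Y 0 = y
  ends_eq : ∀ i ≤ n, G.ends (E i) = s(x, Y i)
  inj : ∀ i ≤ n, ∀ j ≤ n, E i = E j → i = j
  cond : ∀ i < n, ψ (E (i+1)) ∈ G.missingOn k {e₀}ᶜ ψ (Y i)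

/-- Every edge of a multi-fan is the tip of some linear fan. -/
lemma toLin (hends : G.ends e₀ = s(x, y)) {ψ : G.E → ℕ}
    (F : MultiFan G k {e₀}ᶜ ψ x e₀ y) (j : Fin (F.p + 1)) :
    ∃ L : LinFan G k x y e₀ ψ, L.E L.n = F.edge j ∧ L.Y L.n = F.vx j ∧
      ∀ i ≤ L.n, ∃ l : Fin (F.p + 1), l ≤ j ∧ L.E i = F.edge l ∧ L.Y i = F.vx l := by
  suffices H : ∀ m : ℕ, ∀ j : Fin (F.p + 1), j.val ≤ m →
      ∃ L : LinFan G k x y e₀ ψ, L.E L.n = F.edge j ∧ L.Y L.n = F.vx j ∧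
      ∀ i ≤ L.n, ∃ l : Fin (F.p + 1), l ≤ j ∧ L.E i = F.edge l ∧ L.Y i = F.vx l by
    exact H j.val j le_rfl
  intro m
  induction m with
  | zero =>
    intro j hj
    have hj0 : j = 0 := by
      apply Fin.ext; simpa using hj
    subst hj0
    refine ⟨⟨0, fun _ => e₀, fun _ => y, rfl, rfl, ?_, ?_, ?_⟩, ?_, ?_, ?_⟩
    · intro i hi
      exact hends
    · intro i hi j hj _; omega
    · intro i hi; omega
    · simp [F.edge_zero]
    · simp [F.vx_zero]
    · intro i hi
      exact ⟨0, le_refl _, by simp [F.edge_zero], by simp [F.vx_zero]⟩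
  | succ m ih =>
    intro j hj
    by_cases hjm : j.val ≤ m
    · exact ih j hjm
    -- j.val = m+1 > 0
    have hj0 : j ≠ 0 := by
      intro h; subst h; simp at hjm
    obtain ⟨j', hj'lt, hmiss⟩ := F.fan_cond j hj0
    obtain ⟨L, hE, hY, hinv⟩ := ih j' (by omega)
    classical
    refine ⟨⟨L.n + 1, fun i => if i = L.n + 1 then F.edge j else L.E i,
      fun i => if i = L.n + 1 then F.vx j else L.Y i, ?_, ?_, ?_, ?_, ?_⟩, ?_, ?_, ?_⟩
    · simp [L.E0]
    · simp [L.Y0]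
    · intro i hi
      by_cases h : i = L.n + 1
      · simp [h, F.ends_eq]
      · simpa [h] using L.ends_eq i (by omega)
    · intro i hi i' hi' hEq0
      have hEq : (if i = L.n + 1 then F.edge j else L.E i)
          = (if i' = L.n + 1 then F.edge j else L.E i') := hEq0
      by_cases h : i = L.n + 1 <;> by_cases h' : i' = L.n + 1
      · omega
      · exfalso
        rw [if_pos h, if_neg h'] at hEq
        obtain ⟨l, hl, hEl, _⟩ := hinv i' (by omega)
        rw [hEl] at hEq
        have : j = l := F.edge_inj hEq
        subst this
        exact absurd (lt_of_le_of_lt hl hj'lt) (lt_irrefl _)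
      · exfalso
        rw [if_pos h', if_neg h] at hEq
        obtain ⟨l, hl, hEl, _⟩ := hinv i (by omega)
        rw [hEl] at hEq
        have : l = j := F.edge_inj hEq
        subst this
        exact absurd (lt_of_le_of_lt hl hj'lt) (lt_irrefl _)
      · simp only [if_neg h, if_neg h'] at hEq
        exact L.inj i (by omega) i' (by omega) hEq
    · intro i hi
      by_cases h : i = L.n
      · subst h
        have h1 : L.n + 1 = L.n + 1 := rfl
        simp only [if_pos h1, if_neg (by omega : L.n ≠ L.n + 1)]
        rw [hY]
        exact hmiss
      · have h1 : i + 1 ≠ L.n + 1 := by omega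
        simp only [if_neg h1, if_neg (by omega : i ≠ L.n + 1)]
        exact L.cond i (by omega)
    · simp
    · simp
    · intro i hi0
      have hi : i ≤ L.n + 1 := hi0
      by_cases h : i = L.n + 1
      · exact ⟨j, le_refl _, by simp [h], by simp [h]⟩
      · obtain ⟨l, hl, hEl, hYl⟩ := hinv i (by omega)
        exact ⟨l, le_of_lt (lt_of_le_of_lt hl hj'lt), by simp [h, hEl], by simp [h, hYl]⟩

end GSAux
namespace GSAux
open Multigraph
open scoped Classical

variable {G : Multigraph} {k : ℕ} {x y : G.V} {e₀ : G.E} {ψ : G.E → ℕ}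

noncomputable def shiftC (L : LinFan G k x y e₀ ψ) : G.E → ℕ := fun f =>
  if h : ∃ i, i < L.n ∧ f = L.E i then ψ (L.E (Classical.choose h + 1)) else ψ f

lemma shiftC_eq (L : LinFan G k x y e₀ ψ) {i : ℕ} (hi : i < L.n) :
    shiftC L (L.E i) = ψ (L.E (i + 1)) := by
  have h : ∃ i', i' < L.n ∧ L.E i = L.E i' := ⟨i, hi, rfl⟩
  rw [shiftC, dif_pos h]
  obtain ⟨h1, h2⟩ := Classical.choose_spec h
  have : Classical.choose h = i := L.inj _ (le_of_lt h1) i (le_of_lt hi) h2.symm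
  rw [this]

lemma shiftC_not (L : LinFan G k x y e₀ ψ) {f : G.E} (hf : ∀ i, i < L.n → f ≠ L.E i) :
    shiftC L f = ψ f := by
  rw [shiftC, dif_neg]
  rintro ⟨i, hi, rfl⟩
  exact hf i hi rfl

lemma E_ne_e₀ (L : LinFan G k x y e₀ ψ) {i : ℕ} (hi : i ≤ L.n) (hi0 : i ≠ 0) :
    L.E i ≠ e₀ := by
  intro h
  exact hi0 (L.inj i hi 0 (Nat.zero_le _) (h.trans L.E0.symm))

lemma x_mem_ends (L : LinFan G k x y e₀ ψ) {i : ℕ} (hi : i ≤ L.n) : x ∈ G.ends (L.E i) := by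
  rw [L.ends_eq i hi]; exact Sym2.mem_mk_left x _

lemma Y_mem_ends (L : LinFan G k x y e₀ ψ) {i : ℕ} (hi : i ≤ L.n) : L.Y i ∈ G.ends (L.E i) := by
  rw [L.ends_eq i hi]; exact Sym2.mem_mk_right x _

section
variable (hψ : G.IsProperColoringOn k {e₀}ᶜ ψ) (L : LinFan G k x y e₀ ψ)

/-- An unshifted edge distinct from the tip avoids the whole fan, hence lies in `G - e₀`. -/
lemma unshifted_ne (hf : ∀ i, i < L.n → f ≠ L.E i) (htop : f ≠ L.E L.n) :
    f ≠ e₀ := by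
  intro h
  have h' : f = L.E 0 := h.trans L.E0.symm
  rcases Nat.eq_zero_or_pos L.n with h0 | h0
  · exact htop (by rw [h', h0])
  · exact hf 0 h0 h'

include hψ

/-- shifted edge (at position `i < n`) vs unshifted edge sharing a vertex. -/
lemma shift_mixed {i : ℕ} (hi : i < L.n) {f : G.E}
    (hf : ∀ i', i' < L.n → f ≠ L.E i') (hftop : f ≠ L.E L.n)
    (hadj : ∃ v, v ∈ G.ends (L.E i) ∧ v ∈ G.ends f) :
    ψ (L.E (i + 1)) ≠ ψ f := by
  obtain ⟨v, hv1, hv2⟩ := hadj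
  have hfD : f ≠ e₀ := unshifted_ne L hf hftop
  rw [L.ends_eq i (le_of_lt hi)] at hv1
  rcases Sym2.mem_iff.mp hv1 with rfl | rfl
  · -- shared vertex is x
    have h1 : L.E (i+1) ≠ e₀ := E_ne_e₀ L (by omega) (by omega)
    have h2 : L.E (i+1) ≠ f := by
      rcases Nat.lt_or_ge (i+1) L.n with h | h
      · exact fun hh => hf (i+1) h hh.symm
      · have : i + 1 = L.n := by omega
        exact fun hh => hftop (by rw [← this, hh])
    exact hψ.2 _ h1 _ hfD h2 ⟨v, x_mem_ends L (by omega), hv2⟩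
  · -- shared vertex is Y i
    have := (missing_iff.mp (L.cond i hi)).2 f hfD hv2
    exact fun hh => this hh.symm

lemma shift_proper : G.IsProperColoringOn k ({L.E L.n}ᶜ) (shiftC L) := by
  classical
  constructor
  · intro f hf
    have hf' : f ≠ L.E L.n := hf
    by_cases h : ∃ i, i < L.n ∧ f = L.E i
    · obtain ⟨i, hi, rfl⟩ := h
      rw [shiftC_eq L hi]
      exact hψ.1 _ (E_ne_e₀ L (by omega) (by omega))
    · push_neg at h
      rw [shiftC_not L (fun i hi => h i hi)]
      exact hψ.1 _ (unshifted_ne L (fun i hi => h i hi) hf')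
  · intro e he f hf hne hadj
    have he' : e ≠ L.E L.n := he
    have hf' : f ≠ L.E L.n := hf
    by_cases h1 : ∃ i, i < L.n ∧ e = L.E i <;> by_cases h2 : ∃ i, i < L.n ∧ f = L.E i
    · obtain ⟨i, hi, rfl⟩ := h1
      obtain ⟨i', hi', rfl⟩ := h2
      rw [shiftC_eq L hi, shiftC_eq L hi']
      have hii' : i ≠ i' := fun h => hne (by rw [h])
      refine hψ.2 _ (E_ne_e₀ L (by omega) (by omega)) _ (E_ne_e₀ L (by omega) (by omega))
        (fun hh => hii' (by have := L.inj (i+1) (by omega) (i'+1) (by omega) hh; omega))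
        ⟨x, x_mem_ends L (by omega), x_mem_ends L (by omega)⟩
    · push_neg at h2
      obtain ⟨i, hi, rfl⟩ := h1
      rw [shiftC_eq L hi, shiftC_not L (fun i' hi' => h2 i' hi')]
      exact shift_mixed hψ L hi (fun i' hi' => h2 i' hi') hf' hadj
    · push_neg at h1
      obtain ⟨i, hi, rfl⟩ := h2
      rw [shiftC_eq L hi, shiftC_not L (fun i' hi' => h1 i' hi')]
      obtain ⟨v, hv1, hv2⟩ := hadj
      exact (shift_mixed hψ L hi (fun i' hi' => h1 i' hi') he' ⟨v, hv2, hv1⟩).symm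
    · push_neg at h1; push_neg at h2
      rw [shiftC_not L (fun i hi => h1 i hi), shiftC_not L (fun i hi => h2 i hi)]
      exact hψ.2 _ (unshifted_ne L (fun i hi => h1 i hi) he') _
        (unshifted_ne L (fun i hi => h2 i hi) hf') hne hadj

lemma shift_missing_x {γ : ℕ} (hγx : γ ∈ G.missingOn k {e₀}ᶜ ψ x) :
    ∀ f, f ≠ L.E L.n → x ∈ G.ends f → shiftC L f ≠ γ := by
  intro f hf hx
  by_cases h : ∃ i, i < L.n ∧ f = L.E i
  · obtain ⟨i, hi, rfl⟩ := h
    rw [shiftC_eq L hi]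
    exact (missing_iff.mp hγx).2 _ (E_ne_e₀ L (by omega) (by omega)) (x_mem_ends L (by omega))
  · push_neg at h
    rw [shiftC_not L (fun i hi => h i hi)]
    exact (missing_iff.mp hγx).2 _ (unshifted_ne L (fun i hi => h i hi) hf) hx

lemma shift_missing_top {γ : ℕ} (hγx : γ ∈ G.missingOn k {e₀}ᶜ ψ x)
    (hγ : γ ∈ G.missingOn k {e₀}ᶜ ψ (L.Y L.n)) :
    ∀ f, f ≠ L.E L.n → L.Y L.n ∈ G.ends f → shiftC L f ≠ γ := by
  intro f hf hx
  by_cases h : ∃ i, i < L.n ∧ f = L.E i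
  · obtain ⟨i, hi, rfl⟩ := h
    rw [shiftC_eq L hi]
    exact (missing_iff.mp hγx).2 _ (E_ne_e₀ L (by omega) (by omega)) (x_mem_ends L (by omega))
  · push_neg at h
    rw [shiftC_not L (fun i hi => h i hi)]
    exact (missing_iff.mp hγ).2 _ (unshifted_ne L (fun i hi => h i hi) hf) hx

lemma shift2 {γ : ℕ} (hγx : γ ∈ G.missingOn k {e₀}ᶜ ψ x)
    (hγ : γ ∈ G.missingOn k {e₀}ᶜ ψ (L.Y L.n)) :
    G.IsProperColoringOn k Set.univ (Function.update (shiftC L) (L.E L.n) γ) := by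
  classical
  constructor
  · intro f _
    by_cases h : f = L.E L.n
    · rw [h, Function.update_self]
      exact (missing_iff.mp hγx).1
    · rw [Function.update_of_ne h]
      exact (shift_proper hψ L).1 f h
  · intro e _ f _ hne hadj
    by_cases h1 : e = L.E L.n <;> by_cases h2 : f = L.E L.n
    · exact absurd (h1.trans h2.symm) hne
    · subst h1
      rw [Function.update_self, Function.update_of_ne h2]
      obtain ⟨v, hv1, hv2⟩ := hadj
      rw [L.ends_eq L.n le_rfl] at hv1
      rcases Sym2.mem_iff.mp hv1 with rfl | rfl
      · exact fun hh => shift_missing_x hψ L hγx f h2 hv2 hh.symm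
      · exact fun hh => shift_missing_top hψ L hγx hγ f h2 hv2 hh.symm
    · subst h2
      rw [Function.update_self, Function.update_of_ne h1]
      obtain ⟨v, hv1, hv2⟩ := hadj
      rw [L.ends_eq L.n le_rfl] at hv2
      rcases Sym2.mem_iff.mp hv2 with rfl | rfl
      · exact shift_missing_x hψ L hγx e h1 hv1
      · exact shift_missing_top hψ L hγx hγ e h1 hv1
    · rw [Function.update_of_ne h1, Function.update_of_ne h2]
      exact (shift_proper hψ L).2 e h1 f h2 hne hadj

end

/-- From a common missing color at `x` and the tip of a linear fan, color all of `G`: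
contradiction with `χ'(G) = k+1`. -/
lemma claim1 (he2 : G.chromIndex = k + 1)
    (hψ : G.IsProperColoringOn k {e₀}ᶜ ψ) (L : LinFan G k x y e₀ ψ) {γ : ℕ}
    (hγx : γ ∈ G.missingOn k {e₀}ᶜ ψ x)
    (hγ : γ ∈ G.missingOn k {e₀}ᶜ ψ (L.Y L.n)) : False := by
  have h := shift2 hψ L hγx hγ
  have hle : G.chromIndexOn Set.univ ≤ k := Nat.sInf_le ⟨_, h⟩
  rw [Multigraph.chromIndex] at he2
  omega

end GSAux
namespace GSAux
open Multigraph
open scoped Classical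

variable {G : Multigraph} {k : ℕ} {x y : G.V} {e₀ : G.E} {ψ : G.E → ℕ}

lemma ncard_Icc_nat (a b : ℕ) : (Set.Icc a b).ncard = b + 1 - a := by
  rw [Set.ncard_eq_toFinset_card']; simp

lemma exists_missing_x (hends : G.ends e₀ = s(x, y)) (hΔ : G.maxDegree ≤ k)
    (hψ : G.IsProperColoringOn k {e₀}ᶜ ψ) : ∃ β, β ∈ G.missingOn k {e₀}ᶜ ψ x := by
  by_contra hcon
  push_neg at hcon
  set S : Set G.E := {f | x ∈ G.ends f} with hS
  set A : Set G.E := {f | f ≠ e₀ ∧ x ∈ G.ends f} with hA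
  have hAS : A ⊂ S := by
    constructor
    · intro f hf; exact hf.2
    · intro hsub
      have : e₀ ∈ A := hsub (by rw [hS]; exact Set.mem_setOf.mpr (by rw [hends]; exact Sym2.mem_mk_left x y))
      exact this.1 rfl
  have hdeg : S.ncard ≤ k := by
    have h1 : G.degree x ≤ G.maxDegree := by
      apply le_csSup (Set.finite_range G.degree).bddAbove
      exact Set.mem_range_self x
    exact le_trans h1 hΔ
  have hAcard : A.ncard < k :=
    lt_of_lt_of_le (Set.ncard_lt_ncard hAS (Set.toFinite S)) hdeg
  have hsub : Set.Icc 1 k ⊆ ψ '' A := by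
    intro γ hγ
    have := hcon γ
    rw [missing_iff] at this
    push_neg at this
    obtain ⟨f, hf1, hf2, hf3⟩ := this hγ
    exact ⟨f, ⟨hf1, hf2⟩, hf3⟩
  have h1 : k ≤ (ψ '' A).ncard := by
    have := Set.ncard_le_ncard hsub (Set.toFinite _)
    rwa [ncard_Icc_nat, Nat.add_sub_cancel] at this
  have h2 : (ψ '' A).ncard ≤ A.ncard := Set.ncard_image_le (Set.toFinite A)
  omega

lemma extend_proper {f : G.E} {k' : ℕ} {c : G.E → ℕ}
    (hc : G.IsProperColoringOn k' ({f}ᶜ) c) :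
    G.IsProperColoringOn (k' + 1) Set.univ (Function.update c f (k' + 1)) := by
  have hval : ∀ g, g ≠ f → Function.update c f (k' + 1) g ∈ Set.Icc 1 k' := by
    intro g hg
    rw [Function.update_of_ne hg]
    exact hc.1 g hg
  constructor
  · intro e _
    by_cases h : e = f
    · rw [h, Function.update_self]
      simp [Set.mem_Icc]
    · have := hval e h
      rw [Set.mem_Icc] at *
      omega
  · intro e _ g _ hne hadj
    by_cases h1 : e = f <;> by_cases h2 : g = f
    · exact absurd (h1.trans h2.symm) hne
    · subst h1
      rw [Function.update_self]
      have := hval g h2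
      rw [Set.mem_Icc] at this
      omega
    · subst h2
      rw [Function.update_self]
      have := hval e h1
      rw [Set.mem_Icc] at this
      omega
    · rw [Function.update_of_ne h1, Function.update_of_ne h2]
      exact hc.2 e h1 g h2 hne hadj

lemma crit_edge (hends : G.ends e₀ = s(x, y)) (he : G.IsCriticalEdge k e₀)
    (hψ : G.IsProperColoringOn k {e₀}ᶜ ψ)
    (F : MultiFan G k {e₀}ᶜ ψ x e₀ y) (j : Fin (F.p + 1)) :
    G.IsCriticalEdge k (F.edge j) := by
  obtain ⟨L, hE, hY, _⟩ := toLin hends F j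
  have hc := shift_proper hψ L
  rw [hE] at hc
  refine ⟨?_, he.2⟩
  have hub : G.chromIndexOn ({F.edge j}ᶜ) ≤ k := Nat.sInf_le ⟨_, hc⟩
  have hmem : G.chromIndexOn ({F.edge j}ᶜ) ∈
      {k' | ∃ c, G.IsProperColoringOn k' ({F.edge j}ᶜ) c} := Nat.sInf_mem ⟨k, _, hc⟩
  obtain ⟨c', hc'⟩ := hmem
  have hext := extend_proper hc'
  have hle : G.chromIndexOn Set.univ ≤ G.chromIndexOn ({F.edge j}ᶜ) + 1 :=
    Nat.sInf_le ⟨_, hext⟩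
  have he2 := he.2
  rw [Multigraph.chromIndex] at he2
  omega

end GSAux
namespace GSAux

section Trail
variable {V : Type} (a b : V → Option V) (x : V)

/-- The forced alternating trail starting at a vertex with no `b`-edge. -/
def trail : ℕ → Option V
  | 0 => some x
  | n + 1 => (trail n).bind (fun w => if Even n then a w else b w)

variable {a b x}

lemma trail_succ (n : ℕ) :
    trail a b x (n + 1) = (trail a b x n).bind (fun w => if Even n then a w else b w) := rfl

lemma trail_arrive {n : ℕ} {w : V} (h : trail a b x (n + 1) = some w) :
    ∃ w₀, trail a b x n = some w₀ ∧ (if Even n then a w₀ else b w₀) = some w := by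
  rw [trail_succ] at h
  cases htm : trail a b x n with
  | none => rw [htm] at h; simp at h
  | some w₀ => rw [htm] at h; exact ⟨w₀, rfl, by simpa using h⟩

lemma trail_none_mono {n m : ℕ} (h : trail a b x n = none) (hnm : n ≤ m) :
    trail a b x m = none := by
  induction m with
  | zero =>
    have hn : n = 0 := by omega
    exact hn ▸ h
  | succ m ih =>
    rcases Nat.lt_or_ge n (m + 1) with h1 | h1
    · rw [trail_succ, ih (by omega)]; rfl
    · have hn : n = m + 1 := by omega
      exact hn ▸ h

variable (ha : ∀ u v, a u = some v → a v = some u)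
  (hb : ∀ u v, b u = some v → b v = some u) (hx : b x = none)

include ha hb hx in
lemma trail_reach {w : V}
    (h : Relation.ReflTransGen (fun p q => a p = some q ∨ b p = some q) x w) :
    ∃ n, trail a b x n = some w := by
  induction h with
  | refl => exact ⟨0, rfl⟩
  | @tail w' w hh hstep ih =>
    obtain ⟨n, hn⟩ := ih
    rcases hstep with hstep | hstep
    · rcases Nat.even_or_odd n with hev | hodd
      · exact ⟨n + 1, by rw [trail_succ, hn]; simp [hev, hstep]⟩
      · obtain ⟨l, hl⟩ := hodd
        obtain ⟨m, hm⟩ : ∃ m, n = m + 1 := ⟨2 * l, by omega⟩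
        have hevm : Even m := ⟨l, by omega⟩
        subst hm
        obtain ⟨w₀, hw₀, harr⟩ := trail_arrive hn
        rw [if_pos hevm] at harr
        have h2 : a w' = some w₀ := ha _ _ harr
        rw [hstep] at h2
        exact ⟨m, by rw [Option.some_inj.mp h2]; exact hw₀⟩
    · rcases Nat.even_or_odd n with hev | hodd
      · rcases Nat.eq_zero_or_pos n with rfl | hpos
        · have hwx : x = w' := Option.some_inj.mp hn
          rw [← hwx, hx] at hstep
          exact absurd hstep (by simp)
        · obtain ⟨m, hm⟩ : ∃ m, n = m + 1 := ⟨n - 1, by omega⟩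
          subst hm
          have hoddm : ¬Even m := by
            rcases hev with ⟨l, hl⟩
            rintro ⟨l2, hl2⟩; omega
          obtain ⟨w₀, hw₀, harr⟩ := trail_arrive hn
          rw [if_neg hoddm] at harr
          have h2 : b w' = some w₀ := hb _ _ harr
          rw [hstep] at h2
          exact ⟨m, by rw [Option.some_inj.mp h2]; exact hw₀⟩
      · have hnev : ¬Even n := by
          rcases hodd with ⟨l, hl⟩
          rintro ⟨l2, hl2⟩; omega
        exact ⟨n + 1, by rw [trail_succ, hn]; simp [hnev, hstep]⟩

include ha in
lemma trail_end {u : V} (hu : a u = none) (hune : u ≠ x) {n : ℕ}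
    (hn : trail a b x n = some u) : trail a b x (n + 1) = none := by
  rcases Nat.eq_zero_or_pos n with rfl | hpos
  · exact absurd (Option.some_inj.mp hn).symm hune
  obtain ⟨m, rfl⟩ : ∃ m, n = m + 1 := ⟨n - 1, by omega⟩
  obtain ⟨w₀, hw₀, harr⟩ := trail_arrive hn
  rcases Nat.even_or_odd m with hev | hodd
  · rw [if_pos hev] at harr
    have h2 := ha _ _ harr
    rw [hu] at h2
    exact absurd h2 (by simp)
  · have hevn : Even (m + 1) := by
      rcases hodd with ⟨l, hl⟩; exact ⟨l + 1, by omega⟩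
    rw [trail_succ, hn]
    simp [hevn, hu]

include ha hb hx in
lemma trail_lemma {u v : V} (hu : a u = none) (hv : a v = none)
    (hune : u ≠ x) (hvne : v ≠ x)
    (hru : Relation.ReflTransGen (fun p q => a p = some q ∨ b p = some q) x u)
    (hrv : Relation.ReflTransGen (fun p q => a p = some q ∨ b p = some q) x v) :
    u = v := by
  obtain ⟨n, hn⟩ := trail_reach ha hb hx hru
  obtain ⟨m, hm⟩ := trail_reach ha hb hx hrv
  have h1 := trail_end ha hu hune hn
  have h2 := trail_end ha hv hvne hm
  rcases lt_trichotomy n m with h | h | h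
  · have := trail_none_mono h1 (by omega : n + 1 ≤ m)
    rw [this] at hm
    exact absurd hm (by simp)
  · subst h
    rw [hn] at hm
    exact Option.some_inj.mp hm
  · have := trail_none_mono h2 (by omega : m + 1 ≤ n)
    rw [this] at hn
    exact absurd hn (by simp)

end Trail
end GSAux
namespace GSAux
open Multigraph
open scoped Classical

lemma sym2_pair2 {W : Type} {s : Sym2 W} {w w' : W} (h1 : w ∈ s) (h2 : w' ∈ s)
    (hne : w ≠ w') : s = s(w', w) := by
  induction s using Sym2.ind with
  | _ p q =>
    rcases Sym2.mem_iff.mp h1 with rfl | rfl <;> rcases Sym2.mem_iff.mp h2 with h | h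
    · exact absurd h.symm hne
    · rw [h]; exact Sym2.eq_swap
    · rw [h]
    · exact absurd h.symm hne

/-- There is an edge of `G - e₀` joining `w,w'` with color `γ`. -/
def Pc (G : Multigraph) (e₀ : G.E) (ψ : G.E → ℕ) (γ : ℕ) (w w' : G.V) : Prop :=
  ∃ f, f ≠ e₀ ∧ G.ends f = s(w, w') ∧ ψ f = γ

variable {G : Multigraph} {k : ℕ} {x y : G.V} {e₀ : G.E} {ψ : G.E → ℕ}

lemma Pc_symm {γ : ℕ} {w w' : G.V} (h : Pc G e₀ ψ γ w w') : Pc G e₀ ψ γ w' w := by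
  obtain ⟨f, h1, h2, h3⟩ := h
  exact ⟨f, h1, h2.trans Sym2.eq_swap, h3⟩

lemma Pc_unique (hψ : G.IsProperColoringOn k {e₀}ᶜ ψ) {γ : ℕ} {w w' w'' : G.V}
    (h1 : Pc G e₀ ψ γ w w') (h2 : Pc G e₀ ψ γ w w'') : w' = w'' := by
  obtain ⟨f, hf1, hf2, hf3⟩ := h1
  obtain ⟨g, hg1, hg2, hg3⟩ := h2
  by_cases hfg : f = g
  · subst hfg
    rw [hf2] at hg2
    rcases Sym2.eq_iff.mp hg2 with ⟨-, h⟩ | ⟨ha, hb⟩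
    · exact h
    · rw [hb, ha]
  · exact absurd (hf3.trans hg3.symm)
      (hψ.2 f hf1 g hg1 hfg ⟨w, by rw [hf2]; exact Sym2.mem_mk_left w w',
        by rw [hg2]; exact Sym2.mem_mk_left w w''⟩)

/-- The partial matching given by the `γ`-colored edges of `G - e₀`. -/
noncomputable def mfn (G : Multigraph) (e₀ : G.E) (ψ : G.E → ℕ) (γ : ℕ) :
    G.V → Option G.V := fun w =>
  if h : ∃ w', Pc G e₀ ψ γ w w' then some h.choose else none

lemma mfn_some_iff (hψ : G.IsProperColoringOn k {e₀}ᶜ ψ) {γ : ℕ} {w w' : G.V} :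
    mfn G e₀ ψ γ w = some w' ↔ Pc G e₀ ψ γ w w' := by
  constructor
  · intro h
    by_cases hh : ∃ w'', Pc G e₀ ψ γ w w''
    · rw [mfn, dif_pos hh] at h
      rw [← Option.some_inj.mp h]
      exact hh.choose_spec
    · rw [mfn, dif_neg hh] at h
      exact absurd h (by simp)
  · intro h
    have hh : ∃ w'', Pc G e₀ ψ γ w w'' := ⟨w', h⟩
    rw [mfn, dif_pos hh]
    exact Option.some_inj.mpr (Pc_unique hψ hh.choose_spec h)

lemma mfn_none_iff {γ : ℕ} {w : G.V} :
    mfn G e₀ ψ γ w = none ↔ ∀ w', ¬ Pc G e₀ ψ γ w w' := by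
  constructor
  · intro h w' hP
    rw [mfn, dif_pos ⟨w', hP⟩] at h
    exact absurd h (by simp)
  · intro h
    rw [mfn, dif_neg (by push_neg; exact h)]

lemma mfn_symm (hψ : G.IsProperColoringOn k {e₀}ᶜ ψ) {γ : ℕ} {w w' : G.V}
    (h : mfn G e₀ ψ γ w = some w') : mfn G e₀ ψ γ w' = some w :=
  (mfn_some_iff hψ).mpr (Pc_symm ((mfn_some_iff hψ).mp h))

lemma missing_mfn_none {γ : ℕ} {w : G.V} (hmiss : γ ∈ G.missingOn k {e₀}ᶜ ψ w) :
    mfn G e₀ ψ γ w = none := by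
  rw [mfn_none_iff]
  rintro w' ⟨f, hf1, hf2, hf3⟩
  exact (missing_iff.mp hmiss).2 f hf1 (by rw [hf2]; exact Sym2.mem_mk_left w w') hf3

lemma mfn_none_missing {γ : ℕ} {w : G.V} (hγ : γ ∈ Set.Icc 1 k)
    (h : mfn G e₀ ψ γ w = none) : γ ∈ G.missingOn k {e₀}ᶜ ψ w := by
  rw [missing_iff]
  refine ⟨hγ, fun f hf1 hf2 hf3 => ?_⟩
  obtain ⟨w', hw'⟩ := sym2_pair hf2
  exact mfn_none_iff.mp h w' ⟨f, hf1, hw', hf3⟩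

lemma chainStep_iff {α β : ℕ} {w w' : G.V} :
    G.chainStep {e₀}ᶜ ψ α β w w' ↔ (Pc G e₀ ψ α w w' ∨ Pc G e₀ ψ β w w') := by
  constructor
  · rintro ⟨f, hf1, hf2, hf3 | hf3⟩
    · exact Or.inl ⟨f, hf1, hf2, hf3⟩
    · exact Or.inr ⟨f, hf1, hf2, hf3⟩
  · rintro (⟨f, hf1, hf2, hf3⟩ | ⟨f, hf1, hf2, hf3⟩)
    · exact ⟨f, hf1, hf2, Or.inl hf3⟩
    · exact ⟨f, hf1, hf2, Or.inr hf3⟩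

/-- The Kempe swap of colors `α,β` on the edges meeting `C`. -/
noncomputable def swapC (G : Multigraph) (e₀ : G.E) (ψ : G.E → ℕ) (α β : ℕ)
    (C : Set G.V) : G.E → ℕ := fun f =>
  if f ≠ e₀ ∧ (ψ f = α ∨ ψ f = β) ∧ (∃ w ∈ G.ends f, w ∈ C)
  then (if ψ f = α then β else α) else ψ f

section Swap
variable {α β : ℕ} {C : Set G.V}
  (hC : ∀ w ∈ C, ∀ w', G.chainStep {e₀}ᶜ ψ α β w w' → w' ∈ C)

include hC in
lemma swap_endpoints {f : G.E} (hf1 : f ≠ e₀) (hf2 : ψ f = α ∨ ψ f = β)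
    (hf3 : ∃ w ∈ G.ends f, w ∈ C) : ∀ w ∈ G.ends f, w ∈ C := by
  obtain ⟨w', hw'1, hw'2⟩ := hf3
  intro w hw
  by_cases hww : w = w'
  · exact hww ▸ hw'2
  · exact hC w' hw'2 w ⟨f, hf1, sym2_pair2 hw hw'1 hww, hf2⟩

lemma swap_not_swapped {f : G.E}
    (h : ¬ (f ≠ e₀ ∧ (ψ f = α ∨ ψ f = β) ∧ (∃ w ∈ G.ends f, w ∈ C))) :
    swapC G e₀ ψ α β C f = ψ f := if_neg h

lemma swap_swapped {f : G.E}
    (h : f ≠ e₀ ∧ (ψ f = α ∨ ψ f = β) ∧ (∃ w ∈ G.ends f, w ∈ C)) :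
    swapC G e₀ ψ α β C f = if ψ f = α then β else α := if_pos h

include hC in
lemma swap_proper (hψ : G.IsProperColoringOn k {e₀}ᶜ ψ)
    (hα : α ∈ Set.Icc 1 k) (hβ : β ∈ Set.Icc 1 k) (hαβ : α ≠ β) :
    G.IsProperColoringOn k {e₀}ᶜ (swapC G e₀ ψ α β C) := by
  constructor
  · intro f hf
    by_cases h : f ≠ e₀ ∧ (ψ f = α ∨ ψ f = β) ∧ (∃ w ∈ G.ends f, w ∈ C)
    · rw [swap_swapped h]
      by_cases hfa : ψ f = α
      · rw [if_pos hfa]; exact hβ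
      · rw [if_neg hfa]; exact hα
    · rw [swap_not_swapped h]
      exact hψ.1 f hf
  · intro e he f hf hne hadj
    have he' : e ≠ e₀ := he
    have hf' : f ≠ e₀ := hf
    have hcol := hψ.2 e he f hf hne hadj
    by_cases h1 : e ≠ e₀ ∧ (ψ e = α ∨ ψ e = β) ∧ (∃ w ∈ G.ends e, w ∈ C) <;>
      by_cases h2 : f ≠ e₀ ∧ (ψ f = α ∨ ψ f = β) ∧ (∃ w ∈ G.ends f, w ∈ C)
    · rw [swap_swapped h1, swap_swapped h2]
      rcases h1.2.1 with ha | hb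
      · rw [if_pos ha]
        have hfb : ψ f = β := h2.2.1.resolve_left (fun h => hcol (ha.trans h.symm))
        rw [if_neg (by rw [hfb]; exact fun hh => hαβ hh.symm)]
        exact fun hh => hαβ hh.symm
      · rw [if_neg (by rw [hb]; exact fun hh => hαβ hh.symm)]
        have hfa : ψ f = α := h2.2.1.resolve_right (fun h => hcol (hb.trans h.symm))
        rw [if_pos hfa]
        exact fun hh => hαβ hh
    · rw [swap_swapped h1, swap_not_swapped h2]
      have hfab : ¬(ψ f = α ∨ ψ f = β) := by
        intro hh
        obtain ⟨v, hv1, hv2⟩ := hadj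
        exact h2 ⟨hf', hh, v, hv2, swap_endpoints hC h1.1 h1.2.1 h1.2.2 v hv1⟩
      push_neg at hfab
      by_cases hfa : ψ e = α
      · rw [if_pos hfa]; exact fun hh => hfab.2 hh.symm
      · rw [if_neg hfa]; exact fun hh => hfab.1 hh.symm
    · rw [swap_not_swapped h1, swap_swapped h2]
      have heab : ¬(ψ e = α ∨ ψ e = β) := by
        intro hh
        obtain ⟨v, hv1, hv2⟩ := hadj
        exact h1 ⟨he', hh, v, hv1, swap_endpoints hC h2.1 h2.2.1 h2.2.2 v hv2⟩
      push_neg at heab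
      by_cases hfa : ψ f = α
      · rw [if_pos hfa]; exact heab.2
      · rw [if_neg hfa]; exact heab.1
    · rw [swap_not_swapped h1, swap_not_swapped h2]
      exact hcol

include hC in
lemma swap_eq_of_not_mem {w : G.V} (hw : w ∉ C) {f : G.E} (hf : w ∈ G.ends f) :
    swapC G e₀ ψ α β C f = ψ f := by
  apply swap_not_swapped
  intro h
  exact hw (swap_endpoints hC h.1 h.2.1 h.2.2 w hf)

lemma swap_missing_other {γ : ℕ} (hγα : γ ≠ α) (hγβ : γ ≠ β) {w : G.V}
    (h : γ ∈ G.missingOn k {e₀}ᶜ ψ w) : γ ∈ G.missingOn k {e₀}ᶜ (swapC G e₀ ψ α β C) w := by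
  rw [missing_iff] at h ⊢
  refine ⟨h.1, fun f hf1 hf2 => ?_⟩
  by_cases hq : f ≠ e₀ ∧ (ψ f = α ∨ ψ f = β) ∧ (∃ w ∈ G.ends f, w ∈ C)
  · rw [swap_swapped hq]
    by_cases hfa : ψ f = α
    · rw [if_pos hfa]; exact fun hh => hγβ hh.symm
    · rw [if_neg hfa]; exact fun hh => hγα hh.symm
  · rw [swap_not_swapped hq]
    exact h.2 f hf1 hf2

lemma swap_missing_beta {w : G.V} (hw : w ∈ C) (hβ : β ∈ Set.Icc 1 k) (hαβ : α ≠ β)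
    (hmiss : α ∈ G.missingOn k {e₀}ᶜ ψ w) :
    β ∈ G.missingOn k {e₀}ᶜ (swapC G e₀ ψ α β C) w := by
  rw [missing_iff]
  refine ⟨hβ, fun f hf1 hf2 => ?_⟩
  by_cases hq : f ≠ e₀ ∧ (ψ f = α ∨ ψ f = β) ∧ (∃ w ∈ G.ends f, w ∈ C)
  · rw [swap_swapped hq]
    have : ψ f ≠ α := (missing_iff.mp hmiss).2 f hf1 hf2
    rw [if_neg this]
    exact fun hh => hαβ hh
  · rw [swap_not_swapped hq]
    intro hh
    exact hq ⟨hf1, Or.inr hh, w, hf2, hw⟩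

include hC in
lemma swap_alpha_dichotomy {w : G.V} (hmiss : α ∈ G.missingOn k {e₀}ᶜ ψ w) :
    α ∈ G.missingOn k {e₀}ᶜ (swapC G e₀ ψ α β C) w ∨ w ∈ C := by
  by_contra hcon
  push_neg at hcon
  obtain ⟨h1, h2⟩ := hcon
  rw [missing_iff] at h1
  push_neg at h1
  obtain ⟨f, hf1, hf2, hf3⟩ := h1 (missing_iff.mp hmiss).1
  by_cases hq : f ≠ e₀ ∧ (ψ f = α ∨ ψ f = β) ∧ (∃ w ∈ G.ends f, w ∈ C)
  · exact h2 (swap_endpoints hC hq.1 hq.2.1 hq.2.2 w hf2)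
  · rw [swap_not_swapped hq] at hf3
    exact (missing_iff.mp hmiss).2 f hf1 hf2 hf3

end Swap
end GSAux
namespace GSAux
open Multigraph
open scoped Classical

lemma rtg_symm {W : Type} {r : W → W → Prop} (hsym : ∀ p q, r p q → r q p) {p q : W}
    (h : Relation.ReflTransGen r p q) : Relation.ReflTransGen r q p := by
  induction h with
  | refl => exact Relation.ReflTransGen.refl
  | tail hpq hstep ih =>
    exact Relation.ReflTransGen.trans (Relation.ReflTransGen.single (hsym _ _ hstep)) ih

variable {G : Multigraph} {k : ℕ} {x y : G.V} {e₀ : G.E} {φ : G.E → ℕ}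

lemma chainStep_symm {D : Set G.E} {c : G.E → ℕ} {α β : ℕ} {p q : G.V}
    (h : G.chainStep D c α β p q) : G.chainStep D c α β q p := by
  obtain ⟨f, h1, h2, h3⟩ := h
  exact ⟨f, h1, h2.trans Sym2.eq_swap, h3⟩

lemma claim1' (hends : G.ends e₀ = s(x, y)) (he2 : G.chromIndex = k + 1)
    (hψ : G.IsProperColoringOn k {e₀}ᶜ φ) (F : MultiFan G k {e₀}ᶜ φ x e₀ y)
    (j : Fin (F.p + 1)) {γ : ℕ} (hγx : γ ∈ G.missingOn k {e₀}ᶜ φ x)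
    (hγj : γ ∈ G.missingOn k {e₀}ᶜ φ (F.vx j)) : False := by
  obtain ⟨L, hE, hY, -⟩ := toLin hends F j
  exact claim1 he2 hψ L hγx (by rw [hY]; exact hγj)

lemma claim2 (hends : G.ends e₀ = s(x, y)) (hΔ : G.maxDegree ≤ k)
    (he : G.IsCriticalEdge k e₀) (hφ : G.IsProperColoringOn k {e₀}ᶜ φ)
    (F : MultiFan G k {e₀}ᶜ φ x e₀ y) (i j : Fin (F.p + 1))
    (huv : F.vx i ≠ F.vx j) {α : ℕ}
    (hi : α ∈ G.missingOn k {e₀}ᶜ φ (F.vx i))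
    (hj : α ∈ G.missingOn k {e₀}ᶜ φ (F.vx j)) : False := by
  obtain ⟨β, hβx⟩ := exists_missing_x hends hΔ hφ
  have hβu : β ∉ G.missingOn k {e₀}ᶜ φ (F.vx i) :=
    fun h => claim1' hends he.2 hφ F i hβx h
  have hβv : β ∉ G.missingOn k {e₀}ᶜ φ (F.vx j) :=
    fun h => claim1' hends he.2 hφ F j hβx h
  have hαβ : α ≠ β := fun h => hβu (h ▸ hi)
  have hαIcc : α ∈ Set.Icc 1 k := (missing_iff.mp hi).1
  have hβIcc : β ∈ Set.Icc 1 k := (missing_iff.mp hβx).1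
  -- the key "one of the two is not on x's chain" step
  have hstep_iff : ∀ p q : G.V, G.chainStep {e₀}ᶜ φ α β p q ↔
      (mfn G e₀ φ α p = some q ∨ mfn G e₀ φ β p = some q) := by
    intro p q
    rw [chainStep_iff, mfn_some_iff (k := k) hφ, mfn_some_iff (k := k) hφ]
  have hkey : ¬ Relation.ReflTransGen (G.chainStep {e₀}ᶜ φ α β) x (F.vx i) ∨
      ¬ Relation.ReflTransGen (G.chainStep {e₀}ᶜ φ α β) x (F.vx j) := by
    by_contra hcon
    push_neg at hcon
    obtain ⟨h1, h2⟩ := hcon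
    refine huv (trail_lemma (a := mfn G e₀ φ α) (b := mfn G e₀ φ β) (x := x)
      (fun u v => mfn_symm hφ) (fun u v => mfn_symm hφ) (missing_mfn_none hβx)
      (missing_mfn_none hi) (missing_mfn_none hj)
      (fun h => ne_of_ends (F.ends_eq i) h.symm)
      (fun h => ne_of_ends (F.ends_eq j) h.symm)
      (Relation.ReflTransGen.mono ?_ _ _ h1) (Relation.ReflTransGen.mono ?_ _ _ h2)) <;>
    · intro p q hpq
      exact (hstep_iff p q).mp hpq
  -- a symmetric helper finishing from the vertex not on x's chain
  have final : ∀ m : Fin (F.p + 1), α ∈ G.missingOn k {e₀}ᶜ φ (F.vx m) →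
      ¬ Relation.ReflTransGen (G.chainStep {e₀}ᶜ φ α β) x (F.vx m) → False := by
    intro m hm hnr
    set z := F.vx m with hz
    set C : Set G.V := {w | Relation.ReflTransGen (G.chainStep {e₀}ᶜ φ α β) z w} with hCdef
    have hC : ∀ w ∈ C, ∀ w', G.chainStep {e₀}ᶜ φ α β w w' → w' ∈ C :=
      fun w hw w' hstep => Relation.ReflTransGen.tail hw hstep
    have hxC : x ∉ C := by
      intro hx
      exact hnr (rtg_symm (fun p q => chainStep_symm) hx)
    have hzC : z ∈ C := Relation.ReflTransGen.refl
    set φ' := swapC G e₀ φ α β C with hφ'def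
    have hφ' : G.IsProperColoringOn k {e₀}ᶜ φ' := swap_proper hC hφ hαIcc hβIcc hαβ
    have hβ'x : β ∈ G.missingOn k {e₀}ᶜ φ' x := by
      rw [missing_iff]
      refine ⟨hβIcc, fun f hf1 hf2 => ?_⟩
      rw [hφ'def, swap_eq_of_not_mem hC hxC hf2]
      exact (missing_iff.mp hβx).2 f hf1 hf2
    have hβ'z : β ∈ G.missingOn k {e₀}ᶜ φ' z := swap_missing_beta hzC hβIcc hαβ hm
    obtain ⟨L, hE, hY, -⟩ := toLin hends F m
    have hedge_eq : ∀ i' ≤ L.n, φ' (L.E i') = φ (L.E i') := by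
      intro i' hi'
      exact swap_eq_of_not_mem hC hxC (x_mem_ends L hi')
    have hdich : ∀ i', i' < L.n →
        (φ' (L.E (i' + 1)) ∈ G.missingOn k {e₀}ᶜ φ' (L.Y i') ∨
          β ∈ G.missingOn k {e₀}ᶜ φ' (L.Y i')) := by
      intro i' hi'
      have hcond := L.cond i' hi'
      have hγβ : φ (L.E (i' + 1)) ≠ β :=
        (missing_iff.mp hβx).2 (L.E (i' + 1)) (E_ne_e₀ L (by omega) (by omega))
          (x_mem_ends L (by omega))
      rw [hedge_eq (i' + 1) (by omega)]
      by_cases hγα : φ (L.E (i' + 1)) = α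
      · rw [hγα]
        rw [hγα] at hcond
        rcases swap_alpha_dichotomy hC hcond with h | h
        · exact Or.inl h
        · exact Or.inr (swap_missing_beta h hβIcc hαβ hcond)
      · exact Or.inl (swap_missing_other hγα hγβ hcond)
    have hex : ∃ n', n' = L.n ∨ (n' < L.n ∧
        ¬ (φ' (L.E (n' + 1)) ∈ G.missingOn k {e₀}ᶜ φ' (L.Y n'))) := ⟨L.n, Or.inl rfl⟩
    set n' := Nat.find hex with hn'def
    have hn'le : n' ≤ L.n := Nat.find_le (Or.inl rfl)
    have hQbelow : ∀ i', i' < n' →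
        φ' (L.E (i' + 1)) ∈ G.missingOn k {e₀}ᶜ φ' (L.Y i') := by
      intro i' hi'
      have hmin := Nat.find_min hex (lt_of_lt_of_le hi' (le_of_eq hn'def))
      push_neg at hmin
      exact hmin.2 (by omega)
    refine claim1 he.2 hφ' ⟨n', L.E, L.Y, L.E0, L.Y0,
        fun i' hi' => L.ends_eq i' (le_trans hi' hn'le),
        fun i' hi' j' hj' h => L.inj i' (le_trans hi' hn'le) j' (le_trans hj' hn'le) h,
        hQbelow⟩ hβ'x ?_
    show β ∈ G.missingOn k {e₀}ᶜ φ' (L.Y n')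
    rcases Nat.find_spec hex with h | h
    · rw [← hn'def] at h
      rw [h, hY]
      exact hβ'z
    · rw [← hn'def] at h
      exact (hdich n' h.1).resolve_left h.2
  rcases hkey with h | h
  · exact final i hi h
  · exact final j hj h

end GSAux
/-- **Lemma 3.1(a).** Let `e ∈ E_G(x,y)` be a `k`-critical edge with `k ≥ Δ(G)`, let `φ` be a
`k`-edge-coloring of `G-e` and let `F` be a multi-fan at `x` with respect to `e` and `φ`.
Then `V(F)` is `φ`-elementary and every edge of `F` is a `k`-critical edge of `G`. -/
theorem multifan_elementary_critical (G : Multigraph) (k : ℕ)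
    (x y : G.V) (e₀ : G.E) (hends : G.ends e₀ = s(x, y))
    (hΔ : G.maxDegree ≤ k) (he : G.IsCriticalEdge k e₀)
    (φ : G.E → ℕ) (hφ : G.IsProperColoringOn k {e₀}ᶜ φ)
    (F : Multigraph.MultiFan G k {e₀}ᶜ φ x e₀ y) :
    G.IsElementaryOn k {e₀}ᶜ φ F.verts ∧ ∀ j, G.IsCriticalEdge k (F.edge j) := by
  constructor
  · intro u hu v hv huv
    rw [Set.eq_empty_iff_forall_notMem]
    rintro γ ⟨hγu, hγv⟩
    rw [Multigraph.MultiFan.verts, Set.mem_insert_iff] at hu hv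
    rcases hu with rfl | ⟨i, rfl⟩ <;> rcases hv with rfl | ⟨j, rfl⟩
    · exact huv rfl
    · exact GSAux.claim1' hends he.2 hφ F j hγu hγv
    · exact GSAux.claim1' hends he.2 hφ F i hγv hγu
    · exact GSAux.claim2 hends hΔ he hφ F i j huv hγu hγv
  · intro j
    exact GSAux.crit_edge hends he hφ F j
end

section
/- Let G be a multigraph, let e ∈ E_G(x,y) be a k-critical edge with k ≥ Δ(G), let φ be a k-edge-coloring of G−e, and let F = (x, e, y_0, e_1, y_1, …, e_p, y_p) with y_0 = y be a multi-fan at x with respect to e and φ. If α ∈ φ̄(x) and β ∈ φ̄(y_i) for some 0 ≤ i ≤ p, then the (α,β)-chain containing x and the (α,β)-chain containing y_i coincide: P_x(α,β) = P_{y_i}(α,β). -/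
namespace Multigraph

/-! ### Auxiliary machinery for the proof of Lemma 3.1(b) -/

section Aux

lemma exists_ends_rep (G : Multigraph) (g : G.E) : ∃ a b, G.ends g = s(a, b) := by
  have h : ∀ z : Sym2 G.V, ∃ a b, z = s(a, b) := by
    intro z
    induction z using Sym2.ind with
    | _ a b => exact ⟨a, b, rfl⟩
  exact h _

lemma chainStep_symmetric {G : Multigraph} {D : Set G.E} {c : G.E → ℕ} {α β : ℕ} :
    Symmetric (G.chainStep D c α β) := by
  rintro a b ⟨e, he, hends, hc⟩
  exact ⟨e, he, hends.trans Sym2.eq_swap, hc⟩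

lemma sameChain_symm {G : Multigraph} {D : Set G.E} {c : G.E → ℕ} {α β : ℕ} {a b : G.V}
    (h : G.sameChain D c α β a b) : G.sameChain D c α β b a :=
  by
    induction h with
    | refl => exact Relation.ReflTransGen.refl
    | tail _ hbc ih => exact Relation.ReflTransGen.head (chainStep_symmetric hbc) ih

open Classical in
/-- Swap the colors `α` and `β` on all (`α`,`β`)-colored edges meeting the set `C`. -/
noncomputable def swapC (G : Multigraph) (D : Set G.E) (ψ : G.E → ℕ) (α β : ℕ) (C : Set G.V) :
    G.E → ℕ := fun g =>
  if g ∈ D ∧ (∃ v ∈ G.ends g, v ∈ C) ∧ (ψ g = α ∨ ψ g = β) then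
    (if ψ g = α then β else α)
  else ψ g

variable {G : Multigraph} {k : ℕ} {D : Set G.E} {ψ : G.E → ℕ} {α β : ℕ} {C : Set G.V}

/-- If an edge is colored `α` or `β` and has an endpoint in the chain-closed set `C`,
then all its endpoints lie in `C`. -/
lemma endpoints_mem (hC : ∀ a b, G.chainStep D ψ α β a b → a ∈ C → b ∈ C)
    {g : G.E} (hg : g ∈ D) (hcol : ψ g = α ∨ ψ g = β) (hv : ∃ v ∈ G.ends g, v ∈ C) :
    ∀ w ∈ G.ends g, w ∈ C := by
  obtain ⟨a, b, hab⟩ := G.exists_ends_rep g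
  obtain ⟨v, hv1, hv2⟩ := hv
  have hstep : G.chainStep D ψ α β a b := ⟨g, hg, hab, hcol⟩
  rw [hab, Sym2.mem_iff] at hv1
  have habC : a ∈ C ∧ b ∈ C := by
    rcases hv1 with rfl | rfl
    · exact ⟨hv2, hC _ _ hstep hv2⟩
    · exact ⟨hC _ _ (chainStep_symmetric hstep) hv2, hv2⟩
  intro w hw
  rw [hab, Sym2.mem_iff] at hw
  rcases hw with rfl | rfl
  · exact habC.1
  · exact habC.2

lemma swapC_eq_of_not_cond {g : G.E}
    (h : ¬(g ∈ D ∧ (∃ v ∈ G.ends g, v ∈ C) ∧ (ψ g = α ∨ ψ g = β))) :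
    G.swapC D ψ α β C g = ψ g := by
  unfold swapC
  rw [if_neg h]

lemma swapC_untouched (hC : ∀ a b, G.chainStep D ψ α β a b → a ∈ C → b ∈ C)
    {g : G.E} {v : G.V} (hv : v ∈ G.ends g) (hvC : v ∉ C) :
    G.swapC D ψ α β C g = ψ g := by
  apply swapC_eq_of_not_cond
  rintro ⟨h1, h2, h3⟩
  exact hvC (endpoints_mem hC h1 h3 h2 v hv)

lemma swapC_proper (hψ : G.IsProperColoringOn k D ψ) (hα : α ∈ Set.Icc 1 k)
    (hβ : β ∈ Set.Icc 1 k) (hC : ∀ a b, G.chainStep D ψ α β a b → a ∈ C → b ∈ C) :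
    G.IsProperColoringOn k D (G.swapC D ψ α β C) := by
  constructor
  · intro g hg
    by_cases h : g ∈ D ∧ (∃ v ∈ G.ends g, v ∈ C) ∧ (ψ g = α ∨ ψ g = β)
    · unfold swapC
      rw [if_pos h]
      by_cases hga : ψ g = α
      · rw [if_pos hga]; exact hβ
      · rw [if_neg hga]; exact hα
    · rw [swapC_eq_of_not_cond h]
      exact hψ.1 g hg
  · intro g hg h hh hgh hshare
    obtain ⟨v, hvg, hvh⟩ := hshare
    have hne := hψ.2 g hg h hh hgh ⟨v, hvg, hvh⟩
    by_cases hsg : g ∈ D ∧ (∃ w ∈ G.ends g, w ∈ C) ∧ (ψ g = α ∨ ψ g = β) <;>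
      by_cases hsh : h ∈ D ∧ (∃ w ∈ G.ends h, w ∈ C) ∧ (ψ h = α ∨ ψ h = β)
    · -- both swapped
      unfold swapC
      rw [if_pos hsg, if_pos hsh]
      rcases hsg.2.2 with h1 | h1 <;> rcases hsh.2.2 with h2 | h2
      · exact absurd (h1.trans h2.symm) hne
      · have hab : α ≠ β := fun hq => hne (h1.trans (hq.trans h2.symm))
        rw [if_pos h1, if_neg (fun hha => hab (hha.symm.trans h2))]
        exact hab.symm
      · have hab : α ≠ β := fun hq => hne ((h1.trans hq.symm).trans h2.symm).symm.symm
        rw [if_neg (fun hga => hab (hga.symm.trans h1)), if_pos h2]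
        exact hab
      · exact absurd (h1.trans h2.symm) hne
    · -- g swapped, h not
      have hvC : v ∈ C := endpoints_mem hC hsg.1 hsg.2.2 hsg.2.1 v hvg
      have hhcol : ¬(ψ h = α ∨ ψ h = β) := fun hcol => hsh ⟨hh, ⟨v, hvh, hvC⟩, hcol⟩
      push_neg at hhcol
      unfold swapC
      rw [if_pos hsg, if_neg hsh]
      by_cases hga : ψ g = α
      · rw [if_pos hga]; exact fun hq => hhcol.2 hq.symm
      · rw [if_neg hga]; exact fun hq => hhcol.1 hq.symm
    · -- h swapped, g not
      have hvC : v ∈ C := endpoints_mem hC hsh.1 hsh.2.2 hsh.2.1 v hvh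
      have hgcol : ¬(ψ g = α ∨ ψ g = β) := fun hcol => hsg ⟨hg, ⟨v, hvg, hvC⟩, hcol⟩
      push_neg at hgcol
      unfold swapC
      rw [if_neg hsg, if_pos hsh]
      by_cases hha : ψ h = α
      · rw [if_pos hha]; exact hgcol.2
      · rw [if_neg hha]; exact hgcol.1
    · rw [swapC_eq_of_not_cond hsg, swapC_eq_of_not_cond hsh]
      exact hne

lemma missing_swapC_of_notmem (hC : ∀ a b, G.chainStep D ψ α β a b → a ∈ C → b ∈ C)
    {v : G.V} (hvC : v ∉ C) {δ : ℕ} (hδ : δ ∈ G.missingOn k D ψ v) :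
    δ ∈ G.missingOn k D (G.swapC D ψ α β C) v := by
  refine ⟨hδ.1, fun g hg hvg => ?_⟩
  rw [swapC_untouched hC hvg hvC]
  exact hδ.2 g hg hvg

lemma missing_swapC_of_ne {v : G.V} {δ : ℕ} (hδα : δ ≠ α) (hδβ : δ ≠ β)
    (hδ : δ ∈ G.missingOn k D ψ v) :
    δ ∈ G.missingOn k D (G.swapC D ψ α β C) v := by
  refine ⟨hδ.1, fun g hg hvg => ?_⟩
  by_cases hsw : g ∈ D ∧ (∃ w ∈ G.ends g, w ∈ C) ∧ (ψ g = α ∨ ψ g = β)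
  · unfold swapC
    rw [if_pos hsw]
    by_cases hga : ψ g = α
    · rw [if_pos hga]; exact fun hq => hδβ hq.symm
    · rw [if_neg hga]; exact fun hq => hδα hq.symm
  · rw [swapC_eq_of_not_cond hsw]
    exact hδ.2 g hg hvg

lemma alpha_missing_swapC {v : G.V} (hvC : v ∈ C) (hβv : β ∈ G.missingOn k D ψ v)
    (hα : α ∈ Set.Icc 1 k) :
    α ∈ G.missingOn k D (G.swapC D ψ α β C) v := by
  refine ⟨hα, fun g hg hvg => ?_⟩
  by_cases hsw : g ∈ D ∧ (∃ w ∈ G.ends g, w ∈ C) ∧ (ψ g = α ∨ ψ g = β)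
  · unfold swapC
    rw [if_pos hsw]
    by_cases hga : ψ g = α
    · rw [if_pos hga]
      intro hba
      exact hβv.2 g hg hvg (hga.trans hba.symm)
    · rw [if_neg hga]
      intro _
      rcases hsw.2.2 with h1 | h1
      · exact hga h1
      · exact hβv.2 g hg hvg h1
  · rw [swapC_eq_of_not_cond hsw]
    intro hga
    exact hsw ⟨hg, ⟨v, hvg, hvC⟩, Or.inl hga⟩

/-- The shifting (fan-recoloring) lemma: a chain of fan edges along which missing colors
match lets us extend the coloring to all of `G`. -/
lemma shift_lemma (G : Multigraph) (k : ℕ) (e₀ : G.E) (x : G.V)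
    (ψ : G.E → ℕ) (hψ : G.IsProperColoringOn k {e₀}ᶜ ψ)
    (t : ℕ) (f : ℕ → G.E) (z : ℕ → G.V) (γ : ℕ)
    (hf0 : f 0 = e₀)
    (hends : ∀ s ≤ t, G.ends (f s) = s(x, z s))
    (hinj : ∀ s ≤ t, ∀ s' ≤ t, f s = f s' → s = s')
    (hD : ∀ s, 1 ≤ s → s ≤ t → f s ≠ e₀)
    (hchain : ∀ s < t, ψ (f (s + 1)) ∈ G.missingOn k {e₀}ᶜ ψ (z s))
    (hγx : γ ∈ G.missingOn k {e₀}ᶜ ψ x)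
    (hγz : γ ∈ G.missingOn k {e₀}ᶜ ψ (z t)) :
    ∃ c, G.IsProperColoringOn k Set.univ c := by
  classical
  set newc : ℕ → ℕ := fun s => if s = t then γ else ψ (f (s + 1)) with hnewc
  set c : G.E → ℕ :=
    fun g => if h : ∃ s, s ≤ t ∧ g = f s then newc (Nat.find h) else ψ g with hc
  have hmemD : ∀ g : G.E, g ≠ e₀ → g ∈ ({e₀}ᶜ : Set G.E) := fun g h => h
  have hfD : ∀ s, 1 ≤ s → s ≤ t → f s ∈ ({e₀}ᶜ : Set G.E) :=
    fun s h1 h2 => hmemD _ (hD s h1 h2)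
  have hxf : ∀ s ≤ t, x ∈ G.ends (f s) := by
    intro s hs
    rw [hends s hs, Sym2.mem_iff]
    exact Or.inl rfl
  have hcfan : ∀ s ≤ t, c (f s) = newc s := by
    intro s hs
    have hex : ∃ s', s' ≤ t ∧ f s = f s' := ⟨s, hs, rfl⟩
    have hspec := Nat.find_spec hex
    have heq : Nat.find hex = s := hinj _ hspec.1 s hs hspec.2.symm
    simp only [hc]
    rw [dif_pos hex, heq]
  have hcnon : ∀ g, (¬∃ s, s ≤ t ∧ g = f s) → c g = ψ g := by
    intro g hg
    simp only [hc]
    rw [dif_neg hg]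
  have newc_missing : ∀ s ≤ t, newc s ∈ G.missingOn k {e₀}ᶜ ψ (z s) := by
    intro s hs
    by_cases hst : s = t
    · subst hst
      simp only [hnewc, if_true]
      exact hγz
    · simp only [hnewc]
      rw [if_neg hst]
      exact hchain s (lt_of_le_of_ne hs hst)
  have newc_inj : ∀ s ≤ t, ∀ s' ≤ t, s ≠ s' → newc s ≠ newc s' := by
    intro s hs s' hs' hne
    by_cases hst : s = t <;> by_cases hst' : s' = t
    · exact absurd (hst.trans hst'.symm) hne
    · have h1 : newc s = γ := by simp only [hnewc]; rw [if_pos hst]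
      have h2 : newc s' = ψ (f (s' + 1)) := by simp only [hnewc]; rw [if_neg hst']
      rw [h1, h2]
      have hlt' : s' < t := lt_of_le_of_ne hs' hst'
      exact fun hq => hγx.2 (f (s' + 1)) (hfD (s' + 1) (by omega) (by omega))
        (hxf (s' + 1) (by omega)) hq.symm
    · have h1 : newc s = ψ (f (s + 1)) := by simp only [hnewc]; rw [if_neg hst]
      have h2 : newc s' = γ := by simp only [hnewc]; rw [if_pos hst']
      rw [h1, h2]
      have hlt : s < t := lt_of_le_of_ne hs hst
      exact fun hq => hγx.2 (f (s + 1)) (hfD (s + 1) (by omega) (by omega))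
        (hxf (s + 1) (by omega)) hq
    · have hlt : s < t := lt_of_le_of_ne hs hst
      have hlt' : s' < t := lt_of_le_of_ne hs' hst'
      simp only [hnewc]
      rw [if_neg hst, if_neg hst']
      apply hψ.2 (f (s + 1)) (hfD (s + 1) (by omega) (by omega))
        (f (s' + 1)) (hfD (s' + 1) (by omega) (by omega))
      · intro hq
        have := hinj (s + 1) (by omega) (s' + 1) (by omega) hq
        omega
      · exact ⟨x, hxf (s + 1) (by omega), hxf (s' + 1) (by omega)⟩
  have key : ∀ s ≤ t, ∀ h : G.E, (¬∃ s', s' ≤ t ∧ h = f s') →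
      ∀ v, v ∈ G.ends (f s) → v ∈ G.ends h → c (f s) ≠ c h := by
    intro s hs h hh v hvg hvh
    have hhD : h ∈ ({e₀}ᶜ : Set G.E) :=
      hmemD h (fun heq => hh ⟨0, Nat.zero_le t, heq.trans hf0.symm⟩)
    rw [hcfan s hs, hcnon h hh]
    have hveq : v = x ∨ v = z s := by
      rw [hends s hs, Sym2.mem_iff] at hvg
      exact hvg
    rcases hveq with rfl | rfl
    · by_cases hst : s = t
      · subst hst
        simp only [hnewc, if_true]
        exact fun hq => hγx.2 h hhD hvh hq.symm
      · have hlt : s < t := lt_of_le_of_ne hs hst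
        simp only [hnewc]
        rw [if_neg hst]
        apply hψ.2 (f (s + 1)) (hfD (s + 1) (by omega) (by omega)) h hhD
        · exact fun hq => hh ⟨s + 1, by omega, hq.symm⟩
        · exact ⟨v, hxf (s + 1) (by omega), hvh⟩
    · exact fun hq => (newc_missing s hs).2 h hhD hvh hq.symm
  refine ⟨c, ?_, ?_⟩
  · intro g _
    by_cases hg : ∃ s, s ≤ t ∧ g = f s
    · obtain ⟨s, hs, rfl⟩ := hg
      rw [hcfan s hs]
      exact (newc_missing s hs).1
    · rw [hcnon g hg]
      exact hψ.1 g (hmemD g (fun heq => hg ⟨0, Nat.zero_le t, heq.trans hf0.symm⟩))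
  · intro g _ h _ hgh hshare
    obtain ⟨v, hvg, hvh⟩ := hshare
    by_cases hg : ∃ s, s ≤ t ∧ g = f s <;> by_cases hh : ∃ s, s ≤ t ∧ h = f s
    · obtain ⟨s, hs, rfl⟩ := hg
      obtain ⟨s', hs', rfl⟩ := hh
      rw [hcfan s hs, hcfan s' hs']
      exact newc_inj s hs s' hs' (fun hq => hgh (by rw [hq]))
    · obtain ⟨s, hs, rfl⟩ := hg
      exact key s hs h hh v hvg hvh
    · obtain ⟨s, hs, rfl⟩ := hh
      exact (key s hs g hg v hvh hvg).symm
    · rw [hcnon g hg, hcnon h hh]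
      exact hψ.2 g (hmemD g (fun heq => hg ⟨0, Nat.zero_le t, heq.trans hf0.symm⟩))
        h (hmemD h (fun heq => hh ⟨0, Nat.zero_le t, heq.trans hf0.symm⟩)) hgh ⟨v, hvg, hvh⟩

/-- Down-chain of a multi-fan: from any index there is a decreasing chain of fan indices
down to `0` along which the fan condition links consecutive members. -/
lemma MultiFan.downchain {G : Multigraph} {k : ℕ} {D : Set G.E} {c : G.E → ℕ}
    {x : G.V} {e₀ : G.E} {y₀ : G.V} (F : MultiFan G k D c x e₀ y₀) (i : Fin (F.p + 1)) :
    ∃ (t : ℕ) (m : ℕ → Fin (F.p + 1)), m 0 = 0 ∧ m t = i ∧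
      (∀ s s', s < s' → s' ≤ t → m s < m s') ∧
      ∀ s < t, c (F.edge (m (s + 1))) ∈ G.missingOn k D c (F.vx (m s)) := by
  have H : ∀ n : ℕ, ∀ i : Fin (F.p + 1), i.val = n →
      ∃ (t : ℕ) (m : ℕ → Fin (F.p + 1)), m 0 = 0 ∧ m t = i ∧
        (∀ s s', s < s' → s' ≤ t → m s < m s') ∧
        ∀ s < t, c (F.edge (m (s + 1))) ∈ G.missingOn k D c (F.vx (m s)) := by
    intro n
    induction n using Nat.strong_induction_on with
    | _ n ih =>
      intro i hi
      by_cases h0 : i = 0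
      · subst h0
        exact ⟨0, fun _ => 0, rfl, rfl, fun s s' h1 h2 => absurd h2 (by omega),
          fun s hs => absurd hs (by omega)⟩
      · obtain ⟨j, hj, hmem⟩ := F.fan_cond i h0
        obtain ⟨t, m, hm0, hmt, hmono, hchain⟩ := ih j.val (by rw [← hi]; exact hj) j rfl
        refine ⟨t + 1, fun s => if s ≤ t then m s else i, ?_, ?_, ?_, ?_⟩
        · show (if 0 ≤ t then m 0 else i) = 0
          rw [if_pos (Nat.zero_le t)]
          exact hm0
        · show (if t + 1 ≤ t then m (t + 1) else i) = i
          rw [if_neg (by omega)]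
        · intro s s' hss' hs'
          show (if s ≤ t then m s else i) < (if s' ≤ t then m s' else i)
          by_cases h1 : s' ≤ t
          · rw [if_pos (le_trans (le_of_lt hss') h1), if_pos h1]
            exact hmono s s' hss' h1
          · have hs'eq : s' = t + 1 := by omega
            subst hs'eq
            rw [if_neg (show ¬(t + 1 ≤ t) by omega), if_pos (show s ≤ t by omega)]
            have hle : m s ≤ m t := by
              by_cases hst : s = t
              · subst hst; exact le_refl _
              · exact le_of_lt (hmono s t (by omega) (le_refl t))
            exact lt_of_le_of_lt (hmt ▸ hle) hj
        · intro s hs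
          show c (F.edge (if s + 1 ≤ t then m (s + 1) else i)) ∈
            G.missingOn k D c (F.vx (if s ≤ t then m s else i))
          by_cases h1 : s < t
          · rw [if_pos (by omega : s + 1 ≤ t), if_pos (by omega : s ≤ t)]
            exact hchain s h1
          · have hseq : s = t := by omega
            subst hseq
            rw [if_neg (show ¬(s + 1 ≤ s) by omega), if_pos (le_refl s), hmt]
            exact hmem
  exact H i.val i rfl

end Aux

end Multigraph
open Multigraph in
/-- **Lemma 3.1(b).** Let `e ∈ E_G(x,y)` be a `k`-critical edge with `k ≥ Δ(G)`, let `φ` be a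
`k`-edge-coloring of `G-e` and let `F` be a multi-fan at `x` with respect to `e` and `φ`.
If `α ∈ φ̄(x)` and `β ∈ φ̄(y_i)` for some `0 ≤ i ≤ p`, then
`P_x(α,β) = P_{y_i}(α,β)`, i.e. `x` and `y_i` lie on the same `(α,β)`-chain. -/
theorem multifan_chain (G : Multigraph) (k : ℕ)
    (x y : G.V) (e₀ : G.E) (hends : G.ends e₀ = s(x, y))
    (hΔ : G.maxDegree ≤ k) (he : G.IsCriticalEdge k e₀)
    (φ : G.E → ℕ) (hφ : G.IsProperColoringOn k {e₀}ᶜ φ)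
    (F : Multigraph.MultiFan G k {e₀}ᶜ φ x e₀ y)
    (i : Fin (F.p + 1)) (α β : ℕ)
    (hα : α ∈ G.missingOn k {e₀}ᶜ φ x)
    (hβ : β ∈ G.missingOn k {e₀}ᶜ φ (F.vx i)) :
    G.sameChain {e₀}ᶜ φ α β x (F.vx i) := by
  classical
  have hNC : ¬∃ c, G.IsProperColoringOn k Set.univ c := by
    rintro ⟨c, hc⟩
    have h1 : G.chromIndex ≤ k := Nat.sInf_le ⟨c, hc⟩
    rw [he.2] at h1
    omega
  suffices H : ∀ n : ℕ, ∀ i' : Fin (F.p + 1), i'.val = n →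
      β ∈ G.missingOn k {e₀}ᶜ φ (F.vx i') → G.sameChain {e₀}ᶜ φ α β x (F.vx i') by
    exact H i.val i rfl hβ
  intro n
  induction n using Nat.strong_induction_on with
  | _ n ih =>
  intro i hin hβi
  obtain ⟨t, m, hm0, hmt, hmono, hchain⟩ := Multigraph.MultiFan.downchain F i
  -- basic facts about the down-chain, reused in both cases below
  have hf0 : F.edge (m 0) = e₀ := by rw [hm0, F.edge_zero]
  have hends' : ∀ s ≤ t, G.ends (F.edge (m s)) = s(x, F.vx (m s)) := fun s _ => F.ends_eq _
  have hinj' : ∀ s ≤ t, ∀ s' ≤ t, F.edge (m s) = F.edge (m s') → s = s' := by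
    intro s hs s' hs' heq
    have hmm := F.edge_inj heq
    by_contra hne
    rcases lt_or_gt_of_ne hne with h | h
    · exact absurd hmm (ne_of_lt (hmono s s' h hs'))
    · exact absurd hmm.symm (ne_of_lt (hmono s' s h hs))
  have hD' : ∀ s, 1 ≤ s → s ≤ t → F.edge (m s) ≠ e₀ := by
    intro s h1 h2 heq
    have h3 : m s = 0 := F.edge_inj (heq.trans F.edge_zero.symm)
    have h4 := hmono 0 s (by omega) h2
    rw [hm0, h3] at h4
    exact lt_irrefl _ h4
  have hxe : ∀ s ≤ t, x ∈ G.ends (F.edge (m s)) := by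
    intro s hs
    rw [hends' s hs, Sym2.mem_iff]
    exact Or.inl rfl
  by_cases hab : α = β
  · -- degenerate case: a common missing color, directly recolor the fan
    exfalso
    apply hNC
    apply shift_lemma G k e₀ x φ hφ t (fun s => F.edge (m s)) (fun s => F.vx (m s)) α
      hf0 hends' hinj' hD' hchain hα
    rw [hmt]
    rw [hab]
    exact hβi
  · by_contra hnc
    set C : Set G.V := {v | G.sameChain {e₀}ᶜ φ α β (F.vx i) v} with hCdef
    have hCcl : ∀ a b, G.chainStep {e₀}ᶜ φ α β a b → a ∈ C → b ∈ C :=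
      fun a b hst ha => Relation.ReflTransGen.tail ha hst
    have hxC : x ∉ C := fun hx => hnc (sameChain_symm hx)
    have hφ' : G.IsProperColoringOn k {e₀}ᶜ (G.swapC {e₀}ᶜ φ α β C) :=
      swapC_proper hφ hα.1 hβi.1 hCcl
    apply hNC
    apply shift_lemma G k e₀ x (G.swapC {e₀}ᶜ φ α β C) hφ' t
      (fun s => F.edge (m s)) (fun s => F.vx (m s)) α hf0 hends' hinj' hD'
    · -- the down-chain condition survives the Kempe swap
      intro s hs
      have heq : G.swapC {e₀}ᶜ φ α β C (F.edge (m (s + 1))) = φ (F.edge (m (s + 1))) :=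
        swapC_untouched hCcl (hxe (s + 1) (by omega)) hxC
      rw [heq]
      have hδm := hchain s hs
      by_cases hδβ : φ (F.edge (m (s + 1))) = β
      · -- a β-colored chain edge: its lower endpoint is linked to x by induction
        have h4 := hmono s t hs (le_refl t)
        rw [hmt] at h4
        have hlt : (m s).val < n := by
          rw [← hin]
          exact h4
        have hsc : G.sameChain {e₀}ᶜ φ α β x (F.vx (m s)) :=
          ih (m s).val hlt (m s) rfl (hδβ ▸ hδm)
        have hzC : F.vx (m s) ∉ C := fun hzc => hnc (hsc.trans (sameChain_symm hzc))
        exact missing_swapC_of_notmem hCcl hzC hδm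
      · by_cases hδα : φ (F.edge (m (s + 1))) = α
        · exfalso
          exact hα.2 (F.edge (m (s + 1))) (hD' (s + 1) (by omega) (by omega))
            (hxe (s + 1) (by omega)) hδα
        · exact missing_swapC_of_ne hδα hδβ hδm
    · exact missing_swapC_of_notmem hCcl hxC hα
    · rw [hmt]
      exact alpha_missing_swapC (C := C) (Relation.ReflTransGen.refl) hβi hα.1
end
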